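/- arXiv:2408.04897 — 4 statements merged into one kernel-verified Lean document; each statement's English description precedes it below -/
import Mathlib

section
/- Let b, n, c be positive integers such that 4 ≤ 4b ≤ n. Then for every finite abelian group Γ of order 4·n·b·c there exists a diagonal Γ-magic rectangle set MRS_Γ(n;4b;c). -/
open Finset

/-- A Γ-magic rectangle set `MRS_Γ(m,n;s,k;c)` on partially filled arrays. -/
def IsPartialMRS {Γ : Type*} [AddCommGroup Γ] (m n s k c : ℕ)
    (A : Fin c → Fin m → Fin n → Option Γ) : Prop :=
  (∀ g : Γ, ∃! p : Fin c × Fin m × Fin n, A p.1 p.2.1 p.2.2 = some g) ∧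
  (∀ t : Fin c, ∀ i : Fin m,
    (Finset.univ.filter fun j : Fin n => (A t i j).isSome).card = s) ∧
  (∀ t : Fin c, ∀ j : Fin n,
    (Finset.univ.filter fun i : Fin m => (A t i j).isSome).card = k) ∧
  ∃ ω δ : Γ,
    (∀ t : Fin c, ∀ i : Fin m, (∑ j : Fin n, (A t i j).getD 0) = ω) ∧
    (∀ t : Fin c, ∀ j : Fin n, (∑ i : Fin m, (A t i j).getD 0) = δ)

/-- A diagonal Γ-magic rectangle set `MRS_Γ(n;k;c)`: the filled cells of each array are
exactly those of `k` consecutive diagonals (indices mod `n`). -/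
def IsDiagonalMRS {Γ : Type*} [AddCommGroup Γ] (n k c : ℕ)
    (A : Fin c → Fin n → Fin n → Option Γ) : Prop :=
  IsPartialMRS n n k k c A ∧
  ∀ t : Fin c, ∃ ℓ : ZMod n, ∀ i j : Fin n,
    (A t i j).isSome = true ↔
      ∃ u : ℕ, u < k ∧ ((j : ℕ) : ZMod n) - ((i : ℕ) : ZMod n) = ℓ + (u : ZMod n)





section AuxLemmas
variable {G : Type*} [AddCommGroup G]

lemma aux_exists_not_add_self [Fintype G] (h : 2 ∣ Fintype.card G) :
    ∃ ι : G, ∀ x : G, x + x ≠ ι := by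
  obtain ⟨g, hg⟩ := exists_prime_addOrderOf_dvd_card 2 h
  by_contra hcon
  push_neg at hcon
  have hsurj : Function.Surjective (fun x : G => x + x) := fun ι => hcon ι
  have hinj : Function.Injective (fun x : G => x + x) :=
    Finite.injective_iff_surjective.2 hsurj
  have hg2 : g + g = 0 := by
    have := addOrderOf_nsmul_eq_zero g
    rw [hg, two_nsmul] at this
    exact this
  have hg0 : g ≠ 0 := by
    intro h0
    rw [h0, addOrderOf_zero] at hg
    omega
  exact hg0 (hinj (by simpa using hg2))

lemma aux_transversal {X : Type*} (σ : X → X) (hinv : Function.Involutive σ)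
    (hfp : ∀ x, σ x ≠ x) : ∃ p : X → Prop, ∀ x, p (σ x) ↔ ¬ p x := by
  let s : Setoid X := ⟨fun a b => a = b ∨ σ a = b, ⟨fun a => Or.inl rfl,
    fun {a b} h => by
      rcases h with h | h
      · exact Or.inl h.symm
      · exact Or.inr (by rw [← h, hinv]),
    fun {a b c} hab hbc => by
      rcases hab with h | h <;> rcases hbc with h' | h'
      · exact Or.inl (h.trans h')
      · exact Or.inr (by rw [h]; exact h')
      · exact Or.inr (h.trans h')
      · refine Or.inl ?_
        have h'' := congrArg σ h
        rw [hinv] at h''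
        exact h''.trans h'⟩⟩
  have hmk : ∀ x : X, Quotient.mk s (σ x) = Quotient.mk s x :=
    fun x => Quotient.sound (Or.inr (hinv x))
  have key : ∀ x : X, (Quotient.mk s x).out = x ∨ (Quotient.mk s x).out = σ x := by
    intro x
    have h : s.r (Quotient.mk s x).out x := Quotient.exact (Quotient.out_eq _)
    rcases h with h | h
    · exact Or.inl h
    · exact Or.inr ((hinv _).symm.trans (congrArg σ h))
  refine ⟨fun x => (Quotient.mk s x).out = x, fun x => ?_⟩
  have hne : x ≠ σ x := fun e => hfp x e.symm
  show (Quotient.mk s (σ x)).out = σ x ↔ ¬((Quotient.mk s x).out = x)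
  rw [hmk x]
  rcases key x with h | h <;> simp [h, hne, hfp x]

lemma aux_index_two [Fintype G] (ι : G) (hι : ∀ x : G, x + x ≠ ι) :
    ∃ H : AddSubgroup G, ι ∉ H ∧ ∀ x : G, x ∉ H → x - ι ∈ H := by
  classical
  let A : AddSubgroup G := (AddMonoidHom.id G + AddMonoidHom.id G).range
  have hAmem : ∀ x : G, x + x ∈ A := fun x => ⟨x, rfl⟩
  have hιA : ι ∉ A := by
    rintro ⟨x, hx⟩
    exact hι x hx
  haveI : Finite (AddSubgroup G) :=
    Finite.of_injective (fun K : AddSubgroup G => (K : Set G)) SetLike.coe_injective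
  let S : Set (AddSubgroup G) := {K | A ≤ K ∧ ι ∉ K}
  obtain ⟨H, hHS, hmax⟩ := Set.Finite.exists_maximalFor id S (Set.toFinite S)
    ⟨A, le_refl A, hιA⟩
  refine ⟨H, hHS.2, fun x hx => ?_⟩
  have hxK : x ∈ H ⊔ AddSubgroup.closure {x} :=
    SetLike.le_def.mp le_sup_right (AddSubgroup.mem_closure_singleton.2 ⟨1, one_zsmul x⟩)
  have hιK : ι ∈ H ⊔ AddSubgroup.closure {x} := by
    by_contra hι'
    have hKS : H ⊔ AddSubgroup.closure {x} ∈ S := ⟨le_trans hHS.1 le_sup_left, hι'⟩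
    have hEq : H = H ⊔ AddSubgroup.closure {x} := le_antisymm le_sup_left (hmax hKS le_sup_left)
    rw [← hEq] at hxK
    exact hx hxK
  rcases AddSubgroup.mem_sup.1 hιK with ⟨v, hv, z, hz, hvz⟩
  rcases AddSubgroup.mem_closure_singleton.1 hz with ⟨m, rfl⟩
  have h2x : x + x ∈ H := hHS.1 (hAmem x)
  rcases Int.even_or_odd m with ⟨k, hk⟩ | ⟨k, hk⟩
  · exfalso
    apply hHS.2
    have hmx : m • x ∈ H := by
      rw [hk, add_zsmul, ← zsmul_add]
      exact H.zsmul_mem h2x k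
    rw [← hvz]
    exact H.add_mem hv hmx
  · have hmx : m • x = k • (x + x) + x := by
      rw [hk, add_zsmul, one_zsmul, mul_comm, mul_zsmul, two_zsmul]
    have hxι : x - ι = -(v + k • (x + x)) := by
      rw [← hvz, hmx]; abel
    rw [hxι]
    exact H.neg_mem (H.add_mem hv (H.zsmul_mem h2x k))

end AuxLemmas

lemma aux_sum_range_four {M : Type*} [AddCommMonoid M] (f : ℕ → M) (b : ℕ) :
    ∑ u ∈ range (4 * b), f u
      = ∑ w ∈ range b, (f (4 * w) + f (4 * w + 1) + f (4 * w + 2) + f (4 * w + 3)) := by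
  induction b with
  | zero => simp
  | succ b ih =>
    rw [show 4 * (b + 1) = 4 * b + 1 + 1 + 1 + 1 by ring, sum_range_succ, sum_range_succ,
      sum_range_succ, sum_range_succ, ih, sum_range_succ,
      show 4 * b + 1 + 1 = 4 * b + 2 by ring, show 4 * b + 1 + 1 + 1 = 4 * b + 3 by ring]
    abel

section Main

variable {Γ : Type*} [AddCommGroup Γ]

def Fdef {n c : ℕ} (ι ι' : Γ) (y : Fin c → ℕ → ZMod n → Γ)
    (t : Fin c) (u : ℕ) (i : ZMod n) : Γ :=
  if u % 4 = 0 then y t (u / 4) i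
  else if u % 4 = 1 then ι - y t (u / 4) (i + 1)
  else if u % 4 = 2 then ι' - y t (u / 4) i
  else ι - ι' + y t (u / 4) (i + 1)

variable {n c : ℕ} (ι ι' : Γ) (y : Fin c → ℕ → ZMod n → Γ)

lemma Fdef_q0 (t : Fin c) (w : ℕ) (i : ZMod n) :
    Fdef ι ι' y t (4 * w) i = y t w i := by
  have h1 : (4 * w) % 4 = 0 := by omega
  have h2 : (4 * w) / 4 = w := by omega
  simp [Fdef, h1, h2]

lemma Fdef_q1 (t : Fin c) (w : ℕ) (i : ZMod n) :
    Fdef ι ι' y t (4 * w + 1) i = ι - y t w (i + 1) := by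
  have h1 : (4 * w + 1) % 4 = 1 := by omega
  have h2 : (4 * w + 1) / 4 = w := by omega
  simp [Fdef, h1, h2]

lemma Fdef_q2 (t : Fin c) (w : ℕ) (i : ZMod n) :
    Fdef ι ι' y t (4 * w + 2) i = ι' - y t w i := by
  have h1 : (4 * w + 2) % 4 = 2 := by omega
  have h2 : (4 * w + 2) / 4 = w := by omega
  simp [Fdef, h1, h2]

lemma Fdef_q3 (t : Fin c) (w : ℕ) (i : ZMod n) :
    Fdef ι ι' y t (4 * w + 3) i = ι - ι' + y t w (i + 1) := by
  have h1 : (4 * w + 3) % 4 = 3 := by omega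
  have h2 : (4 * w + 3) / 4 = w := by omega
  simp [Fdef, h1, h2]

end Main


def ofZ {n : ℕ} [NeZero n] (z : ZMod n) : Fin n := ⟨z.val, ZMod.val_lt z⟩

lemma ofZ_val {n : ℕ} [NeZero n] (z : ZMod n) : (((ofZ z : Fin n) : ℕ) : ZMod n) = z :=
  ZMod.natCast_rightInverse z

lemma ofZ_cast {n : ℕ} [NeZero n] (j : Fin n) : ofZ (((j : ℕ) : ℕ) : ZMod n) = j := by
  apply Fin.ext
  show (((j : ℕ) : ZMod n)).val = (j : ℕ)
  rw [ZMod.val_natCast, Nat.mod_eq_of_lt j.isLt]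

theorem aux_main (b n c : ℕ) (hb : 0 < b) (hn : 4 * b ≤ n)
    (Γ : Type*) [AddCommGroup Γ] [Fintype Γ] (hcard : Fintype.card Γ = 4 * n * b * c)
    (ι ι' : Γ) (H : AddSubgroup Γ) (hιH : ι ∉ H) (hι'H : ι' ∈ H)
    (P : Γ → Prop) (hP : ∀ g ∈ H, (P (ι' - g) ↔ ¬ P g))
    (y : Fin c → ℕ → ZMod n → Γ)
    (hyH : ∀ t w i, w < b → y t w i ∈ H)
    (hyP : ∀ t w i, w < b → P (y t w i))
    (hyinj : ∀ t w i t' w' i', w < b → w' < b →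
      y t w i = y t' w' i' → t = t' ∧ w = w' ∧ i = i') :
    ∃ A : Fin c → Fin n → Fin n → Option Γ, IsDiagonalMRS n (4 * b) c A := by
  classical
  haveI : NeZero n := ⟨by omega⟩
  -- basic cast facts
  have hvalcast : ∀ z : ZMod n, ((z.val : ℕ) : ZMod n) = z := fun z =>
    ZMod.natCast_rightInverse z
  have hvu : ∀ u : ℕ, u < n → ((u : ℕ) : ZMod n).val = u := fun u hu => by
    rw [ZMod.val_natCast, Nat.mod_eq_of_lt hu]
  -- membership facts
  have hm1 : ∀ (t : Fin c) (w : ℕ) (i : ZMod n), w < b → ι - y t w i ∉ H := by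
    intro t w i hw hmem
    apply hιH
    have h2 := H.add_mem hmem (hyH t w i hw)
    simpa using h2
  have hm3 : ∀ (t : Fin c) (w : ℕ) (i : ZMod n), w < b → ι - ι' + y t w i ∉ H := by
    intro t w i hw hmem
    apply hιH
    have h2 := H.add_mem hmem (H.sub_mem hι'H (hyH t w i hw))
    have h3 : ι - ι' + y t w i + (ι' - y t w i) = ι := by abel
    rwa [h3] at h2
  -- classification of Fdef values
  have hclass : ∀ (t : Fin c) (u : ℕ) (i : ZMod n), u < 4 * b →
      ((Fdef ι ι' y t u i ∈ H ↔ (u % 4 = 0 ∨ u % 4 = 2)) ∧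
       (u % 4 = 0 → P (Fdef ι ι' y t u i)) ∧
       (u % 4 = 2 → ¬ P (Fdef ι ι' y t u i)) ∧
       (u % 4 = 1 → P (ι - Fdef ι ι' y t u i)) ∧
       (u % 4 = 3 → ¬ P (ι - Fdef ι ι' y t u i))) := by
    intro t u i hu
    rcases (show u % 4 = 0 ∨ u % 4 = 1 ∨ u % 4 = 2 ∨ u % 4 = 3 by omega) with h | h | h | h
    · obtain ⟨w, rfl⟩ : ∃ w, u = 4 * w := ⟨u / 4, by omega⟩
      have hwb : w < b := by omega
      rw [Fdef_q0]
      refine ⟨⟨fun _ => Or.inl h, fun _ => hyH t w i hwb⟩,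
        fun _ => hyP t w i hwb, fun h2 => absurd (h.symm.trans h2) (by norm_num),
        fun h1 => absurd (h.symm.trans h1) (by norm_num),
        fun h3 => absurd (h.symm.trans h3) (by norm_num)⟩
    · obtain ⟨w, rfl⟩ : ∃ w, u = 4 * w + 1 := ⟨u / 4, by omega⟩
      have hwb : w < b := by omega
      rw [Fdef_q1]
      refine ⟨⟨fun hmem => absurd hmem (hm1 t w (i + 1) hwb),
        fun hor => absurd hor (by omega)⟩,
        fun h0 => absurd (h.symm.trans h0) (by norm_num),
        fun h2 => absurd (h.symm.trans h2) (by norm_num),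
        fun _ => ?_,
        fun h3 => absurd (h.symm.trans h3) (by norm_num)⟩
      rw [sub_sub_cancel]
      exact hyP t w (i + 1) hwb
    · obtain ⟨w, rfl⟩ : ∃ w, u = 4 * w + 2 := ⟨u / 4, by omega⟩
      have hwb : w < b := by omega
      rw [Fdef_q2]
      refine ⟨⟨fun _ => Or.inr h, fun _ => H.sub_mem hι'H (hyH t w i hwb)⟩,
        fun h0 => absurd (h.symm.trans h0) (by norm_num),
        fun _ => fun hp => (hP _ (hyH t w i hwb)).1 hp (hyP t w i hwb),
        fun h1 => absurd (h.symm.trans h1) (by norm_num),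
        fun h3 => absurd (h.symm.trans h3) (by norm_num)⟩
    · obtain ⟨w, rfl⟩ : ∃ w, u = 4 * w + 3 := ⟨u / 4, by omega⟩
      have hwb : w < b := by omega
      rw [Fdef_q3]
      refine ⟨⟨fun hmem => absurd hmem (hm3 t w (i + 1) hwb),
        fun hor => absurd hor (by omega)⟩,
        fun h0 => absurd (h.symm.trans h0) (by norm_num),
        fun h2 => absurd (h.symm.trans h2) (by norm_num),
        fun h1 => absurd (h.symm.trans h1) (by norm_num),
        fun _ => ?_⟩
      have h4 : ι - (ι - ι' + y t w (i + 1)) = ι' - y t w (i + 1) := by abel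
      rw [h4]
      exact fun hp => (hP _ (hyH t w (i + 1) hwb)).1 hp (hyP t w (i + 1) hwb)
  -- injectivity
  have hFinj : ∀ (t : Fin c) (u : ℕ) (i : ZMod n) (t' : Fin c) (u' : ℕ) (i' : ZMod n),
      u < 4 * b → u' < 4 * b → Fdef ι ι' y t u i = Fdef ι ι' y t' u' i' →
      t = t' ∧ u = u' ∧ i = i' := by
    intro t u i t' u' i' hu hu' heq
    obtain ⟨c1, c2, c3, c4, c5⟩ := hclass t u i hu
    obtain ⟨d1, d2, d3, d4, d5⟩ := hclass t' u' i' hu'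
    rw [heq] at c1 c2 c3 c4 c5
    have hmod : u % 4 = u' % 4 := by
      by_cases hH : Fdef ι ι' y t' u' i' ∈ H
      · have h1 := c1.1 hH
        have h2 := d1.1 hH
        by_cases hp : P (Fdef ι ι' y t' u' i')
        · have e1 : u % 4 = 0 := by
            rcases h1 with e | e
            · exact e
            · exact absurd hp (c3 e)
          have e2 : u' % 4 = 0 := by
            rcases h2 with e | e
            · exact e
            · exact absurd hp (d3 e)
          omega
        · have e1 : u % 4 = 2 := by
            rcases h1 with e | e
            · exact absurd (c2 e) hp
            · exact e
          have e2 : u' % 4 = 2 := by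
            rcases h2 with e | e
            · exact absurd (d2 e) hp
            · exact e
          omega
      · have h1 : ¬(u % 4 = 0 ∨ u % 4 = 2) := fun hor => hH (c1.2 hor)
        have h2 : ¬(u' % 4 = 0 ∨ u' % 4 = 2) := fun hor => hH (d1.2 hor)
        by_cases hp : P (ι - Fdef ι ι' y t' u' i')
        · have e1 : u % 4 = 1 := by
            by_cases m1 : u % 4 = 1
            · exact m1
            · exact absurd hp (c5 (by omega))
          have e2 : u' % 4 = 1 := by
            by_cases m1 : u' % 4 = 1
            · exact m1
            · exact absurd hp (d5 (by omega))
          omega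
        · have e1 : u % 4 = 3 := by
            by_cases m1 : u % 4 = 3
            · exact m1
            · exact absurd (c4 (by omega)) hp
          have e2 : u' % 4 = 3 := by
            by_cases m1 : u' % 4 = 3
            · exact m1
            · exact absurd (d4 (by omega)) hp
          omega
    rcases (show u % 4 = 0 ∨ u % 4 = 1 ∨ u % 4 = 2 ∨ u % 4 = 3 by omega) with h | h | h | h
    · obtain ⟨w, rfl⟩ : ∃ w, u = 4 * w := ⟨u / 4, by omega⟩
      obtain ⟨w', rfl⟩ : ∃ w', u' = 4 * w' := ⟨u' / 4, by omega⟩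
      rw [Fdef_q0, Fdef_q0] at heq
      obtain ⟨ht, hww, hii⟩ := hyinj t w i t' w' i' (by omega) (by omega) heq
      exact ⟨ht, by omega, hii⟩
    · obtain ⟨w, rfl⟩ : ∃ w, u = 4 * w + 1 := ⟨u / 4, by omega⟩
      obtain ⟨w', rfl⟩ : ∃ w', u' = 4 * w' + 1 := ⟨u' / 4, by omega⟩
      rw [Fdef_q1, Fdef_q1] at heq
      have heq' : y t w (i + 1) = y t' w' (i' + 1) := by
        simpa [sub_sub_cancel] using congrArg (fun z => ι - z) heq
      obtain ⟨ht, hww, hii⟩ := hyinj t w (i + 1) t' w' (i' + 1) (by omega) (by omega) heq'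
      exact ⟨ht, by omega, add_right_cancel hii⟩
    · obtain ⟨w, rfl⟩ : ∃ w, u = 4 * w + 2 := ⟨u / 4, by omega⟩
      obtain ⟨w', rfl⟩ : ∃ w', u' = 4 * w' + 2 := ⟨u' / 4, by omega⟩
      rw [Fdef_q2, Fdef_q2] at heq
      have heq' : y t w i = y t' w' i' := by
        simpa [sub_sub_cancel] using congrArg (fun z => ι' - z) heq
      obtain ⟨ht, hww, hii⟩ := hyinj t w i t' w' i' (by omega) (by omega) heq'
      exact ⟨ht, by omega, hii⟩
    · obtain ⟨w, rfl⟩ : ∃ w, u = 4 * w + 3 := ⟨u / 4, by omega⟩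
      obtain ⟨w', rfl⟩ : ∃ w', u' = 4 * w' + 3 := ⟨u' / 4, by omega⟩
      rw [Fdef_q3, Fdef_q3] at heq
      have heq' : y t w (i + 1) = y t' w' (i' + 1) := add_left_cancel heq
      obtain ⟨ht, hww, hii⟩ := hyinj t w (i + 1) t' w' (i' + 1) (by omega) (by omega) heq'
      exact ⟨ht, by omega, add_right_cancel hii⟩
  -- bijectivity of the total filling map
  have hΦ : Function.Bijective
      (fun q : Fin c × Fin (4 * b) × ZMod n => Fdef ι ι' y q.1 q.2.1.val q.2.2) := by
    rw [Fintype.bijective_iff_injective_and_card]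
    constructor
    · rintro ⟨t, u, i⟩ ⟨t', u', i'⟩ hq
      obtain ⟨h1, h2, h3⟩ := hFinj t u.val i t' u'.val i' u.isLt u'.isLt hq
      exact Prod.ext h1 (Prod.ext (Fin.ext h2) h3)
    · simp only [Fintype.card_prod, Fintype.card_fin, ZMod.card, hcard]
      ring

  -- the array
  set A : Fin c → Fin n → Fin n → Option Γ := fun t i j =>
    if ((j.val : ZMod n) - (i.val : ZMod n)).val < 4 * b then
      some (Fdef ι ι' y t (((j.val : ZMod n) - (i.val : ZMod n)).val) (i.val : ZMod n))
    else none with hA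
  have hsomeiff : ∀ (t : Fin c) (i j : Fin n),
      (A t i j).isSome = true ↔ (((j.val : ZMod n) - (i.val : ZMod n)).val < 4 * b) := by
    intro t i j
    simp only [hA]
    by_cases hd : (((j.val : ZMod n) - (i.val : ZMod n)).val < 4 * b)
    · simp [hd]
    · simp [hd]
  have hgetD : ∀ (t : Fin c) (i j : Fin n), (A t i j).getD 0 =
      if (((j.val : ZMod n) - (i.val : ZMod n)).val < 4 * b) then
        Fdef ι ι' y t (((j.val : ZMod n) - (i.val : ZMod n)).val) ((i.val : ZMod n)) else 0 := by
    intro t i j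
    simp only [hA]
    split <;> simp
  refine ⟨A, ⟨?_, ?_, ?_, ⟨b • (ι + ι), b • (ι + ι), ?_, ?_⟩⟩, ?_⟩
  · -- existence and uniqueness
    intro g
    obtain ⟨⟨t, u, i⟩, hq⟩ := hΦ.2 g
    refine ⟨(t, ofZ i, ofZ (i + (u.val : ZMod n))), ?_, ?_⟩
    · show A t (ofZ i) (ofZ (i + (u.val : ZMod n))) = some g
      simp only [hA]
      rw [ofZ_val, ofZ_val, add_sub_cancel_left, hvu u.val (by omega)]
      rw [if_pos u.isLt]
      exact congrArg some hq
    · rintro ⟨t', i', j'⟩ h'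
      simp only [hA] at h'
      by_cases hd : (((j'.val : ZMod n) - (i'.val : ZMod n)).val < 4 * b)
      · rw [if_pos hd] at h'
        have hfe := Option.some.inj h'
        obtain ⟨ht, hu, hi⟩ := hFinj t' _ _ t u.val i hd u.isLt (hfe.trans hq.symm)
        refine Prod.ext ht (Prod.ext ?_ ?_)
        · show i' = ofZ i
          rw [← hi, ofZ_cast]
        · show j' = ofZ (i + (u.val : ZMod n))
          have h5 : ((j'.val : ZMod n)) = i + (u.val : ZMod n) := by
            have h6 := hvalcast ((j'.val : ZMod n) - (i'.val : ZMod n))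
            rw [hu, hi] at h6
            rw [eq_comm, sub_eq_iff_eq_add] at h6
            rw [h6]; ring
          rw [← h5, ofZ_cast]
      · rw [if_neg hd] at h'
        exact absurd h' (by simp)
  · -- row counts
    intro t i
    rw [show (4 * b) = (range (4 * b)).card from (card_range _).symm]
    apply Finset.card_nbij' (fun j : Fin n => (((j.val : ZMod n) - (i.val : ZMod n)).val))
      (fun u : ℕ => ofZ ((i.val : ZMod n) + (u : ZMod n)))
    · intro j hj
      rw [mem_coe, mem_range]
      exact (hsomeiff t i j).1 ((mem_filter.1 hj).2)
    · intro u hu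
      rw [mem_coe, mem_range] at hu
      refine mem_filter.2 ⟨mem_univ _, ?_⟩
      rw [hsomeiff, ofZ_val, add_sub_cancel_left, hvu u (by omega)]
      exact hu
    · intro j hj
      have hd := (hsomeiff t i j).1 ((mem_filter.1 hj).2)
      beta_reduce
      rw [hvalcast, add_sub_cancel, ofZ_cast]
    · intro u hu
      rw [mem_coe, mem_range] at hu
      beta_reduce
      rw [ofZ_val, add_sub_cancel_left]
      exact hvu u (by omega)
  · -- column counts
    intro t j
    rw [show (4 * b) = (range (4 * b)).card from (card_range _).symm]
    apply Finset.card_nbij' (fun i : Fin n => (((j.val : ZMod n) - (i.val : ZMod n)).val))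
      (fun u : ℕ => ofZ ((j.val : ZMod n) - (u : ZMod n)))
    · intro i hi
      rw [mem_coe, mem_range]
      exact (hsomeiff t i j).1 ((mem_filter.1 hi).2)
    · intro u hu
      rw [mem_coe, mem_range] at hu
      refine mem_filter.2 ⟨mem_univ _, ?_⟩
      rw [hsomeiff, ofZ_val, sub_sub_cancel, hvu u (by omega)]
      exact hu
    · intro i hi
      have hd := (hsomeiff t i j).1 ((mem_filter.1 hi).2)
      beta_reduce
      rw [hvalcast, sub_sub_cancel, ofZ_cast]
    · intro u hu
      rw [mem_coe, mem_range] at hu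
      beta_reduce
      rw [ofZ_val, sub_sub_cancel]
      exact hvu u (by omega)
  · -- row sums
    intro t i
    have step1 : ∑ j : Fin n, (A t i j).getD 0
        = ∑ j ∈ univ.filter (fun j : Fin n => (((j.val : ZMod n) - (i.val : ZMod n)).val < 4 * b)),
            Fdef ι ι' y t (((j.val : ZMod n) - (i.val : ZMod n)).val) ((i.val : ZMod n)) := by
      rw [Finset.sum_filter]
      exact Finset.sum_congr rfl (fun j _ => hgetD t i j)
    rw [step1]
    have step2 : ∑ j ∈ univ.filter (fun j : Fin n => (((j.val : ZMod n) - (i.val : ZMod n)).val < 4 * b)),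
            Fdef ι ι' y t (((j.val : ZMod n) - (i.val : ZMod n)).val) ((i.val : ZMod n))
        = ∑ u ∈ range (4 * b), Fdef ι ι' y t u ((i.val : ZMod n)) := by
      refine Finset.sum_nbij' (fun j : Fin n => (((j.val : ZMod n) - (i.val : ZMod n)).val))
        (fun u : ℕ => ofZ ((i.val : ZMod n) + (u : ZMod n))) ?_ ?_ ?_ ?_ ?_
      · intro j hj
        rw [mem_range]
        exact (mem_filter.1 hj).2
      · intro u hu
        rw [mem_range] at hu
        refine mem_filter.2 ⟨mem_univ _, ?_⟩
        rw [ofZ_val, add_sub_cancel_left, hvu u (by omega)]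
        exact hu
      · intro j hj
        beta_reduce
        rw [hvalcast, add_sub_cancel, ofZ_cast]
      · intro u hu
        rw [mem_range] at hu
        beta_reduce
        rw [ofZ_val, add_sub_cancel_left]
        exact hvu u (by omega)
      · intro j hj
        beta_reduce
        rfl
    rw [step2, aux_sum_range_four (fun u => Fdef ι ι' y t u ((i.val : ZMod n))) b]
    have step3 : ∀ w ∈ range b,
        Fdef ι ι' y t (4 * w) ((i.val : ZMod n)) + Fdef ι ι' y t (4 * w + 1) ((i.val : ZMod n))
          + Fdef ι ι' y t (4 * w + 2) ((i.val : ZMod n))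
          + Fdef ι ι' y t (4 * w + 3) ((i.val : ZMod n)) = ι + ι := by
      intro w hw
      rw [Fdef_q0, Fdef_q1, Fdef_q2, Fdef_q3]
      abel
    rw [Finset.sum_congr rfl step3, Finset.sum_const, card_range]
  · -- column sums
    intro t j
    have step1 : ∑ i : Fin n, (A t i j).getD 0
        = ∑ i ∈ univ.filter (fun i : Fin n => (((j.val : ZMod n) - (i.val : ZMod n)).val < 4 * b)),
            Fdef ι ι' y t (((j.val : ZMod n) - (i.val : ZMod n)).val) ((i.val : ZMod n)) := by
      rw [Finset.sum_filter]
      exact Finset.sum_congr rfl (fun i _ => hgetD t i j)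
    rw [step1]
    have step2 : ∑ i ∈ univ.filter (fun i : Fin n => (((j.val : ZMod n) - (i.val : ZMod n)).val < 4 * b)),
            Fdef ι ι' y t (((j.val : ZMod n) - (i.val : ZMod n)).val) ((i.val : ZMod n))
        = ∑ u ∈ range (4 * b), Fdef ι ι' y t u ((j.val : ZMod n) - (u : ZMod n)) := by
      refine Finset.sum_nbij' (fun i : Fin n => (((j.val : ZMod n) - (i.val : ZMod n)).val))
        (fun u : ℕ => ofZ ((j.val : ZMod n) - (u : ZMod n))) ?_ ?_ ?_ ?_ ?_
      · intro i hi
        rw [mem_range]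
        exact (mem_filter.1 hi).2
      · intro u hu
        rw [mem_range] at hu
        refine mem_filter.2 ⟨mem_univ _, ?_⟩
        rw [ofZ_val, sub_sub_cancel, hvu u (by omega)]
        exact hu
      · intro i hi
        beta_reduce
        rw [hvalcast, sub_sub_cancel, ofZ_cast]
      · intro u hu
        rw [mem_range] at hu
        beta_reduce
        rw [ofZ_val, sub_sub_cancel]
        exact hvu u (by omega)
      · intro i hi
        have harg : (i.val : ZMod n)
            = (j.val : ZMod n) - ((((j.val : ZMod n) - (i.val : ZMod n)).val : ℕ) : ZMod n) := by
          rw [hvalcast, sub_sub_cancel]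
        beta_reduce
        rw [← harg]
    rw [step2, aux_sum_range_four (fun u => Fdef ι ι' y t u ((j.val : ZMod n) - (u : ZMod n))) b]
    have harg1 : ∀ (J : ZMod n) (w : ℕ),
        J - ((4 * w + 1 : ℕ) : ZMod n) + 1 = J - ((4 * w : ℕ) : ZMod n) := by
      intro J w; push_cast; ring
    have harg3 : ∀ (J : ZMod n) (w : ℕ),
        J - ((4 * w + 3 : ℕ) : ZMod n) + 1 = J - ((4 * w + 2 : ℕ) : ZMod n) := by
      intro J w; push_cast; ring
    have step3 : ∀ w ∈ range b,
        Fdef ι ι' y t (4 * w) ((j.val : ZMod n) - ((4 * w : ℕ) : ZMod n))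
          + Fdef ι ι' y t (4 * w + 1) ((j.val : ZMod n) - ((4 * w + 1 : ℕ) : ZMod n))
          + Fdef ι ι' y t (4 * w + 2) ((j.val : ZMod n) - ((4 * w + 2 : ℕ) : ZMod n))
          + Fdef ι ι' y t (4 * w + 3) ((j.val : ZMod n) - ((4 * w + 3 : ℕ) : ZMod n)) = ι + ι := by
      intro w hw
      rw [Fdef_q0, Fdef_q1, Fdef_q2, Fdef_q3, harg1, harg3]
      abel
    rw [Finset.sum_congr rfl step3, Finset.sum_const, card_range]
  · -- diagonal structure
    intro t
    refine ⟨0, fun i j => ?_⟩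
    rw [hsomeiff]
    constructor
    · intro hd
      exact ⟨_, hd, by rw [zero_add]; exact (hvalcast _).symm⟩
    · rintro ⟨u, hu, he⟩
      rw [zero_add] at he
      have h7 : (((j.val : ZMod n) - (i.val : ZMod n)).val) = u := by
        rw [he, hvu u (by omega)]
      omega


/-- Let `4 ≤ 4b ≤ n`. For every abelian group `Γ` of order `4·n·b·c` there exists a diagonal
`MRS_Γ(n;4b;c)`. -/
theorem stmt13 (b n c : ℕ) (hb : 0 < b) (hn : 4 * b ≤ n) (hbn : 4 ≤ 4 * b) (hc : 0 < c)
    (Γ : Type*) [AddCommGroup Γ] [Fintype Γ] (hcard : Fintype.card Γ = 4 * n * b * c) :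
    ∃ A : Fin c → Fin n → Fin n → Option Γ, IsDiagonalMRS n (4 * b) c A := by
  classical
  haveI : NeZero n := ⟨by omega⟩
  obtain ⟨ι, hι⟩ := aux_exists_not_add_self (G := Γ) (by rw [hcard]; exact ⟨2 * n * b * c, by ring⟩)
  obtain ⟨H, hιH, hcov⟩ := aux_index_two ι hι
  have hcardH : Fintype.card ↥H = 2 * n * b * c := by
    have hbij : Function.Bijective
        (Sum.elim (fun h : ↥H => (h : Γ)) (fun h : ↥H => ι + (h : Γ))) := by
      constructor
      · rintro (a | a) (a' | a') he
        · exact congrArg Sum.inl (Subtype.ext he)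
        · exfalso
          apply hιH
          have h1 : ι = (a : Γ) - (a' : Γ) := by
            simp only [Sum.elim_inl, Sum.elim_inr] at he
            rw [he]; abel
          rw [h1]
          exact H.sub_mem a.2 a'.2
        · exfalso
          apply hιH
          have h1 : ι = (a' : Γ) - (a : Γ) := by
            simp only [Sum.elim_inl, Sum.elim_inr] at he
            rw [← he]; abel
          rw [h1]
          exact H.sub_mem a'.2 a.2
        · simp only [Sum.elim_inr] at he
          exact congrArg Sum.inr (Subtype.ext (add_left_cancel he))
      · intro g
        by_cases hg : g ∈ H
        · exact ⟨Sum.inl ⟨g, hg⟩, rfl⟩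
        · refine ⟨Sum.inr ⟨g - ι, hcov g hg⟩, ?_⟩
          simp only [Sum.elim_inr]
          show ι + (g - ι) = g
          abel
    have h2 : Fintype.card ↥H + Fintype.card ↥H = 4 * n * b * c := by
      rw [← Fintype.card_sum, Fintype.card_congr (Equiv.ofBijective _ hbij), hcard]
    have h4 : 2 * Fintype.card ↥H = 2 * (2 * n * b * c) := by
      rw [two_mul, h2]; ring
    exact Nat.eq_of_mul_eq_mul_left (by norm_num) h4
  obtain ⟨ι'0, hι'0⟩ := aux_exists_not_add_self (G := ↥H)
    (by rw [hcardH]; exact ⟨n * b * c, by ring⟩)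
  have hinv : Function.Involutive (fun z : ↥H => ι'0 - z) := fun z => by simp
  have hfp : ∀ z : ↥H, (fun z : ↥H => ι'0 - z) z ≠ z := by
    intro z he
    apply hι'0 z
    have h1 := sub_eq_iff_eq_add.1 he
    exact h1.symm
  obtain ⟨p, hp⟩ := aux_transversal _ hinv hfp
  set P : Γ → Prop := fun g => ∃ hg : g ∈ H, p ⟨g, hg⟩ with hPdef
  have hPiff : ∀ z : ↥H, P (z : Γ) ↔ p z := by
    intro z
    rw [hPdef]
    constructor
    · rintro ⟨hg, hpg⟩
      have h1 : (⟨(z : Γ), hg⟩ : ↥H) = z := Subtype.ext rfl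
      rwa [h1] at hpg
    · intro hz
      refine ⟨z.2, ?_⟩
      have h1 : (⟨(z : Γ), z.2⟩ : ↥H) = z := Subtype.ext rfl
      rwa [h1]
  have hP : ∀ g ∈ H, (P ((ι'0 : Γ) - g) ↔ ¬ P g) := by
    intro g hg
    have h1 : (ι'0 : Γ) - g = ((ι'0 - ⟨g, hg⟩ : ↥H) : Γ) := rfl
    rw [h1, hPiff (ι'0 - ⟨g, hg⟩)]
    have hp' := hp ⟨g, hg⟩
    rw [hp']
    exact not_congr (hPiff ⟨g, hg⟩).symm
  haveI : DecidablePred p := Classical.decPred p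
  have hcardT : Fintype.card {z : ↥H // p z} = n * b * c := by
    have e1 : {z : ↥H // ¬ p z} ≃ {z : ↥H // p z} :=
      { toFun := fun z => ⟨ι'0 - z.1, (hp z.1).2 z.2⟩
        invFun := fun z => ⟨ι'0 - z.1, fun hq => (hp z.1).1 hq z.2⟩
        left_inv := fun z => Subtype.ext (hinv z.1)
        right_inv := fun z => Subtype.ext (hinv z.1) }
    have e2 : {z : ↥H // p z} ⊕ {z : ↥H // ¬ p z} ≃ ↥H := Equiv.sumCompl p
    have h5 : Fintype.card ↥H
        = Fintype.card {z : ↥H // p z} + Fintype.card {z : ↥H // ¬ p z} := by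
      rw [← Fintype.card_congr e2, Fintype.card_sum]
    rw [Fintype.card_congr e1, hcardH] at h5
    have h7 : 2 * Fintype.card {z : ↥H // p z} = 2 * (n * b * c) := by
      rw [two_mul, ← h5]; ring
    exact Nat.eq_of_mul_eq_mul_left (by norm_num) h7
  have hcard2 : Fintype.card (Fin c × Fin b × ZMod n) = Fintype.card {z : ↥H // p z} := by
    simp only [Fintype.card_prod, Fintype.card_fin, ZMod.card, hcardT]
    ring
  set e := Fintype.equivOfCardEq hcard2 with hedef
  set y : Fin c → ℕ → ZMod n → Γ := fun t w i =>
    if h : w < b then (((e (t, ⟨w, h⟩, i)).1 : ↥H) : Γ) else 0 with hydef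
  have hyH : ∀ t w i, w < b → y t w i ∈ H := by
    intro t w i h
    rw [hydef]
    simp only [dif_pos h]
    exact (e (t, ⟨w, h⟩, i)).1.2
  have hyP : ∀ t w i, w < b → P (y t w i) := by
    intro t w i h
    rw [hydef]
    simp only [dif_pos h]
    rw [hPiff (e (t, ⟨w, h⟩, i)).1]
    exact (e (t, ⟨w, h⟩, i)).2
  have hyinj : ∀ t w i t' w' i', w < b → w' < b →
      y t w i = y t' w' i' → t = t' ∧ w = w' ∧ i = i' := by
    intro t w i t' w' i' h h' he
    rw [hydef] at he
    simp only [dif_pos h, dif_pos h'] at he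
    have he2 : e (t, ⟨w, h⟩, i) = e (t', ⟨w', h'⟩, i') := Subtype.ext (Subtype.ext he)
    have he3 := e.injective he2
    refine ⟨congrArg (fun q : Fin c × Fin b × ZMod n => q.1) he3,
      congrArg (fun q : Fin c × Fin b × ZMod n => (q.2.1 : ℕ)) he3,
      congrArg (fun q : Fin c × Fin b × ZMod n => q.2.2) he3⟩
  exact aux_main b n c hb hn Γ hcard ι (ι'0 : Γ) H hιH ι'0.2 P hP y hyH hyP hyinj
end

section
/- Let m, n, s, k be even integers such that 2 ≤ s ≤ n, 2 ≤ k ≤ m and m·s = n·k, and let c ≥ 1. Then for every finite abelian group Γ of order n·k·c there exists a Γ-magic rectangle set MRS_Γ(m,n;s,k;c). -/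
open Finset

def dd (s' n' i j : ℕ) : ℕ := (j + (n' - (i * s') % n')) % n'

lemma dd_patA {s' n' : ℕ} (hn : 0 < n') (i t : ℕ) (ht : t < n') :
    dd s' n' i ((i * s' + t) % n') = t := by
  unfold dd
  have hr0 : (i * s') % n' < n' := Nat.mod_lt _ hn
  rw [Nat.add_mod (i * s') t, Nat.mod_eq_of_lt ht, Nat.mod_add_mod]
  rw [show (i * s') % n' + t + (n' - (i * s') % n') = n' + t by omega]
  rw [Nat.add_mod_left, Nat.mod_eq_of_lt ht]

lemma dd_patB {s' n' : ℕ} (hn : 0 < n') (i j : ℕ) (hj : j < n') :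
    (i * s' + dd s' n' i j) % n' = j := by
  unfold dd
  have hr0 : (i * s') % n' < n' := Nat.mod_lt _ hn
  rw [Nat.add_mod_mod, Nat.add_mod (i * s'), Nat.add_mod_mod,
    show (i * s') % n' + (j + (n' - (i * s') % n')) = n' + j by omega,
    Nat.add_mod_left, Nat.mod_eq_of_lt hj]

lemma dd_rowcard {s' n' : ℕ} (hs : 0 < s') (hsn : s' ≤ n') (i : ℕ) :
    (univ.filter fun j : Fin n' => dd s' n' i j.val < s').card = s' := by
  have hn : 0 < n' := lt_of_lt_of_le hs hsn
  have key : (univ.filter fun j : Fin n' => dd s' n' i j.val < s').card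
      = (univ : Finset (Fin s')).card := by
    refine Finset.card_bij'
      (fun j h => (⟨dd s' n' i j.val, by simpa using h⟩ : Fin s'))
      (fun t _ => (⟨(i * s' + t.val) % n', Nat.mod_lt _ hn⟩ : Fin n'))
      (fun a ha => Finset.mem_univ _) ?_ ?_ ?_
    · intro t _
      simp only [Finset.mem_filter, Finset.mem_univ, true_and]
      rw [dd_patA hn i t.val (lt_of_lt_of_le t.isLt hsn)]
      exact t.isLt
    · intro a ha
      apply Fin.ext
      exact dd_patB hn i a.val a.isLt
    · intro t _
      apply Fin.ext
      exact dd_patA hn i t.val (lt_of_lt_of_le t.isLt hsn)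
  simpa using key

lemma dd_colcard {s' n' m' k' : ℕ} (hs : 0 < s') (hsn : s' ≤ n')
    (heq : m' * s' = n' * k') (j : ℕ) (hj : j < n') :
    (univ.filter fun i : Fin m' => dd s' n' i.val j < s').card = k' := by
  have hn : 0 < n' := lt_of_lt_of_le hs hsn
  have key : (univ.filter fun i : Fin m' => dd s' n' i.val j < s').card
      = (univ : Finset (Fin k')).card := by
    refine Finset.card_bij'
      (fun a ha => (⟨(a.val * s' + dd s' n' a.val j) / n', by
        have h1 : dd s' n' a.val j < s' := by simpa using ha
        have h2 : a.val < m' := a.isLt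
        have h3 : a.val * s' + dd s' n' a.val j < (a.val + 1) * s' := by
          rw [Nat.succ_mul]; omega
        have h4 : (a.val + 1) * s' ≤ m' * s' := Nat.mul_le_mul_right _ h2
        have h5 : a.val * s' + dd s' n' a.val j < n' * k' := by
          rw [← heq]; linarith
        exact Nat.div_lt_of_lt_mul h5⟩ : Fin k'))
      (fun q _ => (⟨(j + n' * q.val) / s', by
        have hq := q.isLt
        have h5 : j + n' * q.val < n' * (q.val + 1) := by rw [Nat.mul_succ]; omega
        have h6 : n' * (q.val + 1) ≤ n' * k' := Nat.mul_le_mul_left _ hq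
        exact Nat.div_lt_of_lt_mul (show j + n' * q.val < s' * m' by
          rw [mul_comm s' m', heq]; omega)⟩ : Fin m'))
      (fun a ha => Finset.mem_univ _) ?_ ?_ ?_
    · intro q _
      simp only [Finset.mem_filter, Finset.mem_univ, true_and]
      set N := j + n' * q.val with hN
      have hmod : N % n' = j := by rw [hN, Nat.add_mul_mod_self_left, Nat.mod_eq_of_lt hj]
      have hNd : N / s' * s' + N % s' = N := by
        rw [mul_comm]; exact Nat.div_add_mod N s'
      have hts : N % s' < s' := Nat.mod_lt _ hs
      have hrw : N % n' = (N / s' * s' + N % s') % n' := by rw [hNd]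
      have hdd : dd s' n' (N / s') j = N % s' := by
        rw [← hmod, hrw]
        exact dd_patA hn _ _ (lt_of_lt_of_le hts hsn)
      rw [hdd]; exact hts
    · intro a ha
      simp only [Finset.mem_filter, Finset.mem_univ, true_and] at ha
      apply Fin.ext
      show (j + n' * ((a.val * s' + dd s' n' a.val j) / n')) / s' = a.val
      set N := a.val * s' + dd s' n' a.val j with hN
      have hmod : N % n' = j := dd_patB hn a.val j hj
      have h1 : j + n' * (N / n') = N := by
        have h := Nat.div_add_mod N n'
        rw [hmod] at h
        linarith
      rw [h1, hN, show a.val * s' + dd s' n' a.val j = dd s' n' a.val j + s' * a.val by ring,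
        Nat.add_mul_div_left _ _ hs, Nat.div_eq_of_lt ha, zero_add]
    · intro q _
      apply Fin.ext
      show ((j + n' * q.val) / s' * s' + dd s' n' ((j + n' * q.val) / s') j) / n' = q.val
      set N := j + n' * q.val with hN
      have hmod : N % n' = j := by rw [hN, Nat.add_mul_mod_self_left, Nat.mod_eq_of_lt hj]
      have hNd : N / s' * s' + N % s' = N := by
        rw [mul_comm]; exact Nat.div_add_mod N s'
      have hts : N % s' < s' := Nat.mod_lt _ hs
      have hrw : N % n' = (N / s' * s' + N % s') % n' := by rw [hNd]
      have hdd : dd s' n' (N / s') j = N % s' := by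
        rw [← hmod, hrw]
        exact dd_patA hn _ _ (lt_of_lt_of_le hts hsn)
      rw [hdd, hNd, hN, Nat.add_mul_div_left _ _ hn, Nat.div_eq_of_lt hj, zero_add]
  simpa using key

def vv {Γ : Type*} [AddCommGroup Γ] (α ε a : Γ) (r u : Fin 2) : Γ :=
  if r = 0 then (if u = 0 then a else α - a)
  else (if u = 0 then α - (a + ε) else a + ε)

lemma vv_row {Γ : Type*} [AddCommGroup Γ] (α ε a : Γ) (hε2 : ε + ε = 0) (r : Fin 2) :
    vv α ε a r 0 + vv α ε a r 1 = α := by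
  fin_cases r <;> simp [vv] <;> abel

lemma vv_col {Γ : Type*} [AddCommGroup Γ] (α ε a : Γ) (hε2 : ε + ε = 0) (u : Fin 2) :
    vv α ε a 0 u + vv α ε a 1 u = α + ε := by
  have hneg : -ε = ε := neg_eq_of_add_eq_zero_right hε2
  fin_cases u <;> simp [vv]
  · rw [show a + (α - (a + ε)) = α - ε by abel, sub_eq_add_neg, hneg]
  · abel

lemma vv_inj {Γ : Type*} [AddCommGroup Γ] {ε α : Γ}
    (hε0 : ε ≠ 0) (hε2 : ε + ε = 0) (hα : ∀ x : Γ, x + x ≠ α)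
    (hαε : ∀ x : Γ, x + x ≠ α + ε) (a : Γ) {r u r' u' : Fin 2}
    (h : vv α ε a r u = vv α ε a r' u') : r = r' ∧ u = u' := by
  have hneg : -ε = ε := neg_eq_of_add_eq_zero_right hε2
  have hd1 : a ≠ α - a := fun h => hα a (eq_sub_iff_add_eq.mp h)
  have hd2 : a ≠ α - (a + ε) := by
    intro h
    apply hαε a
    have h3 : a + (a + ε) = α := eq_sub_iff_add_eq.mp h
    calc a + a = (a + (a + ε)) + ε - (ε + ε) := by abel
      _ = α + ε - 0 := by rw [h3, hε2]
      _ = α + ε := by rw [sub_zero]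
  have hd3 : a ≠ a + ε := fun h => hε0 (left_eq_add.mp h)
  have hd4 : α - a ≠ α - (a + ε) := fun h => hd3 (sub_right_inj.mp h)
  have hd5 : α - a ≠ a + ε := by
    intro h
    apply hαε a
    have h3 : (a + ε) + a = α := eq_sub_iff_add_eq.mp h.symm
    calc a + a = ((a + ε) + a) + ε - (ε + ε) := by abel
      _ = α + ε - 0 := by rw [h3, hε2]
      _ = α + ε := by rw [sub_zero]
  have hd6 : α - (a + ε) ≠ a + ε := by
    intro h
    apply hα a
    have h3 : (a + ε) + (a + ε) = α := eq_sub_iff_add_eq.mp h.symm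
    calc a + a = ((a + ε) + (a + ε)) - (ε + ε) := by abel
      _ = α - 0 := by rw [h3, hε2]
      _ = α := by rw [sub_zero]
  fin_cases r <;> fin_cases u <;> fin_cases r' <;> fin_cases u' <;>
    simp only [vv, if_true, if_false, Fin.mk_one, Fin.mk_zero, Fin.zero_eta,
      one_ne_zero, reduceIte] at h ⊢ <;>
    first
      | exact ⟨rfl, rfl⟩
      | trivial
      | exact absurd h hd1 | exact absurd h.symm hd1
      | exact absurd h hd2 | exact absurd h.symm hd2
      | exact absurd h hd3 | exact absurd h.symm hd3
      | exact absurd h hd4 | exact absurd h.symm hd4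
      | exact absurd h hd5 | exact absurd h.symm hd5
      | exact absurd h hd6 | exact absurd h.symm hd6

lemma exists_reps {Γ : Type*} [AddCommGroup Γ] [Fintype Γ] {ε α : Γ}
    (hε0 : ε ≠ 0) (hε2 : ε + ε = 0) (hα : ∀ x : Γ, x + x ≠ α)
    (hαε : ∀ x : Γ, x + x ≠ α + ε)
    (ι : Type*) [Fintype ι] (hN : Fintype.card Γ = 4 * Fintype.card ι) :
    ∃ w : ι × Fin 2 × Fin 2 → Γ, Function.Bijective w ∧
      (∀ p r, w (p, r, 0) + w (p, r, 1) = α) ∧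
      (∀ p u, w (p, 0, u) + w (p, 1, u) = α + ε) := by
  classical
  have hneg : -ε = ε := neg_eq_of_add_eq_zero_right hε2
  have cancel : ∀ y : Γ, y + ε + ε = y := fun y => by rw [add_assoc, hε2, add_zero]
  have C12 : ∀ x : Γ, (α - x) + ε = α - (x + ε) := by
    intro x
    rw [show α - (x + ε) = α - x - ε by abel, sub_eq_add_neg (α - x), hneg]
  have C13 : ∀ x : Γ, (α - (x + ε)) + ε = α - x := by
    intro x
    rw [show α - (x + ε) = α - x - ε by abel, sub_add_cancel]
  have C22 : ∀ x : Γ, α - (α - x) = x := fun x => sub_sub_cancel α x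
  have C23 : ∀ x : Γ, α - (α - (x + ε)) = x + ε := fun x => sub_sub_cancel α (x + ε)
  have C31 : ∀ x : Γ, α - ((x + ε) + ε) = α - x := fun x => by rw [cancel]
  have C32 : ∀ x : Γ, α - ((α - x) + ε) = x + ε := fun x => by rw [C12, C23]
  have C33 : ∀ x : Γ, α - ((α - (x + ε)) + ε) = x := fun x => by rw [C13, C22]
  set S : Setoid Γ :=
    ⟨fun x y => y = x ∨ y = x + ε ∨ y = α - x ∨ y = α - (x + ε), by
      constructor
      · intro x; exact Or.inl rfl
      · intro x y h
        rcases h with rfl | rfl | rfl | rfl <;>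
          simp [cancel, C12, C13, C22, C23, C31, C32, C33]
      · intro x y z h1 h2
        rcases h1 with rfl | rfl | rfl | rfl <;> rcases h2 with rfl | rfl | rfl | rfl <;>
          simp [cancel, C12, C13, C22, C23, C31, C32, C33]⟩ with hS
  have hr : ∀ x y : Γ, S.r x y ↔ (y = x ∨ y = x + ε ∨ y = α - x ∨ y = α - (x + ε)) :=
    fun x y => Iff.rfl
  have horb : ∀ (a : Γ) (r u : Fin 2), S.r a (vv α ε a r u) := by
    intro a r u
    rw [hr]
    fin_cases r <;> fin_cases u <;> simp [vv]
  have hmk : ∀ (a : Γ) (r u : Fin 2), (⟦vv α ε a r u⟧ : Quotient S) = ⟦a⟧ :=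
    fun a r u => (Quotient.sound (horb a r u)).symm
  set W : Quotient S × Fin 2 × Fin 2 → Γ := fun p => vv α ε p.1.out p.2.1 p.2.2 with hW
  have hWinj : Function.Injective W := by
    rintro ⟨qa, ra, ua⟩ ⟨qb, rb, ub⟩ h
    simp only [hW] at h
    have h1 : (⟦vv α ε qa.out ra ua⟧ : Quotient S) = qa := by rw [hmk]; exact Quotient.out_eq qa
    have h2 : (⟦vv α ε qb.out rb ub⟧ : Quotient S) = qb := by rw [hmk]; exact Quotient.out_eq qb
    have hq : qa = qb := by rw [← h1, ← h2, h]
    subst hq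
    obtain ⟨hru, huu⟩ := vv_inj hε0 hε2 hα hαε qa.out h
    rw [hru, huu]
  have hWsurj : Function.Surjective W := by
    intro x
    have hx := Quotient.mk_out (s := S) x
    rw [hr] at hx
    rcases hx with h | h | h | h
    · exact ⟨(⟦x⟧, 0, 0), by simp only [hW, vv, if_true, reduceIte]; exact h.symm⟩
    · exact ⟨(⟦x⟧, 1, 1), by simp only [hW, vv, one_ne_zero, reduceIte]; exact h.symm⟩
    · exact ⟨(⟦x⟧, 0, 1), by simp only [hW, vv, one_ne_zero, reduceIte]; exact h.symm⟩
    · exact ⟨(⟦x⟧, 1, 0), by simp only [hW, vv, one_ne_zero, reduceIte]; exact h.symm⟩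
  have hWbij : Function.Bijective W := ⟨hWinj, hWsurj⟩
  have hcards : Fintype.card (Quotient S × Fin 2 × Fin 2) = Fintype.card Γ :=
    Fintype.card_of_bijective hWbij
  rw [Fintype.card_prod, Fintype.card_prod, Fintype.card_fin] at hcards
  have hQι : Fintype.card ι = Fintype.card (Quotient S) := by omega
  set eQ : ι ≃ Quotient S := Fintype.equivOfCardEq hQι with heQ
  refine ⟨fun p => W (eQ p.1, p.2.1, p.2.2), ?_, ?_, ?_⟩
  · have : (fun p : ι × Fin 2 × Fin 2 => W (eQ p.1, p.2.1, p.2.2))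
        = W ∘ (Equiv.prodCongr eQ (Equiv.refl (Fin 2 × Fin 2))) := rfl
    rw [this]
    exact hWbij.comp (Equiv.prodCongr eQ (Equiv.refl (Fin 2 × Fin 2))).bijective
  · intro p r; exact vv_row α ε (eQ p).out hε2 r
  · intro p u; exact vv_col α ε (eQ p).out hε2 u

def e2 (n' : ℕ) : Fin n' × Fin 2 ≃ Fin (2 * n') where
  toFun p := ⟨2 * p.1.val + p.2.val, by have h1 := p.1.isLt; have h2 := p.2.isLt; omega⟩
  invFun j := (⟨j.val / 2, by have := j.isLt; omega⟩, ⟨j.val % 2, by omega⟩)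
  left_inv p := by
    obtain ⟨a, b⟩ := p
    have hb := b.isLt
    simp only [Prod.ext_iff, Fin.ext_iff]
    omega
  right_inv j := by
    have := j.isLt
    simp only [Fin.ext_iff]
    omega

lemma sum_pair {M : Type*} [AddCommMonoid M] {n' : ℕ} (F : Fin (2 * n') → M)
    (G : Fin n' → Fin 2 → M)
    (hFG : ∀ (j' : Fin n') (u : Fin 2) (h : 2 * j'.val + u.val < 2 * n'),
      F ⟨2 * j'.val + u.val, h⟩ = G j' u) :
    ∑ j, F j = ∑ j', (G j' 0 + G j' 1) := by
  rw [← Equiv.sum_comp (e2 n') F, Fintype.sum_prod_type]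
  refine Finset.sum_congr rfl fun j' _ => ?_
  rw [Fin.sum_univ_two]
  congr 1 <;> exact hFG j' _ _

lemma exists_alpha (Γ : Type*) [AddCommGroup Γ] [Fintype Γ] (h4 : 4 ∣ Fintype.card Γ) :
    ∃ ε α : Γ, ε ≠ 0 ∧ ε + ε = 0 ∧ (∀ x : Γ, x + x ≠ α) ∧ (∀ x : Γ, x + x ≠ α + ε) := by
  classical
  set φ : Γ →+ Γ := AddMonoidHom.mk' (fun x => x + x) (by intro a b; abel) with hφ
  have hφx : ∀ x : Γ, φ x = x + x := fun x => rfl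
  by_cases hTD : ∃ ε : Γ, ε ≠ 0 ∧ ε + ε = 0 ∧ ε ∈ φ.range
  · obtain ⟨ε, hε0, hε2, hmem⟩ := hTD
    obtain ⟨e, he⟩ := AddMonoidHom.mem_range.mp hmem
    have hninj : ¬ Function.Injective φ := by
      intro h
      exact hε0 (h (a₁ := ε) (a₂ := 0) (by rw [hφx, hφx, hε2, add_zero]))
    have hnsurj : ¬ Function.Surjective φ := fun h =>
      hninj (Finite.injective_iff_surjective.mpr h)
    obtain ⟨α, hα⟩ := not_forall.mp hnsurj
    refine ⟨ε, α, hε0, hε2, ?_, ?_⟩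
    · intro x hx; exact hα ⟨x, hx⟩
    · intro x hx
      refine hα ⟨x - e, ?_⟩
      rw [hφx]
      rw [hφx] at he
      have : (x + x) - (e + e) = α := by rw [hx, he]; abel
      rw [← this]; abel
  · push_neg at hTD
    have hodd : ¬ 2 ∣ Nat.card φ.range := by
      intro h2
      haveI : Fact (Nat.Prime 2) := ⟨Nat.prime_two⟩
      obtain ⟨d, hd⟩ := exists_prime_addOrderOf_dvd_card (G := φ.range) 2
        (by rwa [← Nat.card_eq_fintype_card])
      have hd0 : d ≠ 0 := by
        intro h; rw [h] at hd; simp at hd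
      have hd2 : d + d = 0 := by
        have := addOrderOf_nsmul_eq_zero d
        rw [hd, two_nsmul] at this
        exact this
      refine hTD d.val ?_ ?_ d.2
      · exact fun h => hd0 (Subtype.ext h)
      · exact congrArg Subtype.val hd2
    have hker4 : 4 ∣ Nat.card φ.ker := by
      have h1 : Nat.card Γ = Nat.card (Γ ⧸ φ.ker) * Nat.card φ.ker :=
        AddSubgroup.card_eq_card_quotient_mul_card_addSubgroup φ.ker
      have h2 : Nat.card (Γ ⧸ φ.ker) = Nat.card φ.range :=
        Nat.card_congr (QuotientAddGroup.quotientKerEquivRange φ).toEquiv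
      have h4' : 4 ∣ Nat.card (Γ ⧸ φ.ker) * Nat.card φ.ker := by
        rw [← h1, Nat.card_eq_fintype_card]; exact h4
      rw [h2] at h4'
      -- card range odd, so 4 divides card ker
      rcases h4' with ⟨t, ht⟩
      have hodd' : Odd (Nat.card φ.range) := Nat.odd_iff.mpr (by
        rcases Nat.even_or_odd (Nat.card φ.range) with h | h
        · exact absurd h.two_dvd hodd
        · exact Nat.odd_iff.mp h)
      -- use coprimality: 4 ∣ a * b with a odd → 4 ∣ b
      have hcop : Nat.Coprime 4 (Nat.card φ.range) := by
        have : Nat.Coprime 2 (Nat.card φ.range) :=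
          (Nat.coprime_two_left).mpr hodd'
        simpa [show (4:ℕ) = 2^2 by norm_num] using this.pow_left 2
      exact (Nat.Coprime.dvd_of_dvd_mul_left hcop (by rw [ht]; exact ⟨t, rfl⟩))
    have hcard4 : 4 ≤ Fintype.card φ.ker := by
      rw [← Nat.card_eq_fintype_card]
      have hpos : 0 < Nat.card φ.ker := Nat.card_pos
      exact Nat.le_of_dvd hpos hker4
    -- get two distinct nonzero elements of the kernel
    haveI : Nontrivial φ.ker := by
      rw [← Fintype.one_lt_card_iff_nontrivial]; omega
    obtain ⟨ε₁, hε₁⟩ := exists_ne (0 : φ.ker)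
    have hT : (univ \ ({0, ε₁} : Finset φ.ker)).Nonempty := by
      rw [← Finset.card_pos, Finset.card_sdiff_of_subset (Finset.subset_univ _)]
      have : ({0, ε₁} : Finset φ.ker).card ≤ 2 := Finset.card_insert_le _ _ |>.trans (by simp)
      have := hcard4
      rw [Finset.card_univ]
      omega
    obtain ⟨ε₂, hε₂⟩ := hT
    rw [Finset.mem_sdiff, Finset.mem_insert, Finset.mem_singleton] at hε₂
    push_neg at hε₂
    obtain ⟨-, hε₂0, hε₂1⟩ := hε₂
    have hker : ∀ x : φ.ker, (x : Γ) + (x : Γ) = 0 := by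
      intro x
      have := x.2
      rw [AddMonoidHom.mem_ker, hφx] at this
      exact this
    have hnr : ∀ x : φ.ker, (x : Γ) ≠ 0 → ∀ y : Γ, y + y ≠ (x : Γ) := by
      intro x hx0 y hy
      exact hTD (x : Γ) hx0 (hker x) (AddMonoidHom.mem_range.mpr ⟨y, hy⟩)
    refine ⟨(ε₂ : Γ), (ε₁ : Γ), ?_, hker ε₂, ?_, ?_⟩
    · exact fun h => hε₂0 (Subtype.ext h)
    · exact hnr ε₁ (fun h => hε₁ (Subtype.ext h)) 
    · intro y hy
      have hab : (ε₁:Γ) + ε₂ ≠ 0 := by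
        intro h
        apply hε₂1
        apply Subtype.ext
        have hn : -(ε₁:Γ) = ε₁ := neg_eq_of_add_eq_zero_right (hker ε₁)
        have h2 : (ε₂:Γ) = -(ε₁:Γ) := eq_neg_of_add_eq_zero_right h
        rw [h2, hn]
      have habk : (ε₁:Γ) + ε₂ = ((ε₁+ε₂ : φ.ker) : Γ) := rfl
      exact hTD _ hab (habk ▸ hker _) (AddMonoidHom.mem_range.mpr ⟨y, hy⟩)

theorem main_aux (m' n' s' k' c : ℕ) (hs' : 0 < s') (hsn : s' ≤ n') (hk' : 0 < k')
    (hkm : k' ≤ m') (heq : m' * s' = n' * k') (Γ : Type*) [AddCommGroup Γ] [Fintype Γ]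
    (hcard : Fintype.card Γ = 2 * n' * (2 * k') * c) :
    ∃ A : Fin c → Fin (2 * m') → Fin (2 * n') → Option Γ,
      IsPartialMRS (2 * m') (2 * n') (2 * s') (2 * k') c A := by
  classical
  have hn' : 0 < n' := lt_of_lt_of_le hs' hsn
  have hm' : 0 < m' := lt_of_lt_of_le hk' hkm
  have hcι : Fintype.card Γ = 4 * Fintype.card (Fin c × Fin m' × Fin s') := by
    simp only [Fintype.card_prod, Fintype.card_fin]
    rw [hcard, show m' * s' = n' * k' from heq]; ring
  obtain ⟨ε, α, hε0, hε2, hα, hαε⟩ := exists_alpha Γ ⟨_, hcι⟩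
  obtain ⟨w, hwbij, hwrow, hwcol⟩ := exists_reps hε0 hε2 hα hαε (Fin c × Fin m' × Fin s') hcι
  refine ⟨fun t i j =>
    if h : dd s' n' (i.val / 2) (j.val / 2) < s' then
      some (w ((t, ⟨i.val / 2, by have := i.isLt; omega⟩,
        ⟨dd s' n' (i.val / 2) (j.val / 2), h⟩),
        ⟨i.val % 2, by omega⟩, ⟨j.val % 2, by omega⟩))
    else none, ?_, ?_, ?_, ?_⟩
  · -- uniqueness property
    intro g
    obtain ⟨⟨⟨t, i', t'⟩, r, u⟩, hx⟩ := hwbij.surjective g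
    refine ⟨(t, ⟨2 * i'.val + r.val, by have := i'.isLt; have := r.isLt; omega⟩,
      ⟨2 * ((i'.val * s' + t'.val) % n') + u.val,
        by have := u.isLt; have : (i'.val * s' + t'.val) % n' < n' := Nat.mod_lt _ hn'; omega⟩),
      ?_, ?_⟩
    · simp only
      have e1 : (2 * i'.val + r.val) / 2 = i'.val := by have := r.isLt; omega
      have e2' : (2 * i'.val + r.val) % 2 = r.val := by have := r.isLt; omega
      have e3 : (2 * ((i'.val * s' + t'.val) % n') + u.val) / 2
          = (i'.val * s' + t'.val) % n' := by have := u.isLt; omega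
      have e4 : (2 * ((i'.val * s' + t'.val) % n') + u.val) % 2 = u.val := by
        have := u.isLt; omega
      simp only [e1, e2', e3, e4]
      have e5 : dd s' n' i'.val ((i'.val * s' + t'.val) % n') = t'.val :=
        dd_patA hn' _ _ (lt_of_lt_of_le t'.isLt hsn)
      simp only [e5]
      rw [dif_pos t'.isLt]
      simp only [Fin.eta]
      rw [hx]
    · rintro ⟨tq, iq, jq⟩ hq
      simp only at hq
      by_cases hcnd : dd s' n' (iq.val / 2) (jq.val / 2) < s'
      swap
      · rw [dif_neg hcnd] at hq; exact absurd hq (by simp)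
      rw [dif_pos hcnd] at hq
      have hy : w ((tq, ⟨iq.val / 2, by have := iq.isLt; omega⟩,
          ⟨dd s' n' (iq.val / 2) (jq.val / 2), hcnd⟩),
          ⟨iq.val % 2, by omega⟩, ⟨jq.val % 2, by omega⟩) = w ((t, i', t'), r, u) := by
        rw [hx]
        exact Option.some_injective _ hq
      have hyx := hwbij.injective hy
      simp only [Prod.mk.injEq] at hyx
      obtain ⟨⟨h1, h2, h3⟩, h4, h5⟩ := hyx
      have v2 : iq.val / 2 = i'.val := congrArg Fin.val h2
      have v3 : dd s' n' (iq.val / 2) (jq.val / 2) = t'.val := congrArg Fin.val h3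
      have v4 : iq.val % 2 = r.val := congrArg Fin.val h4
      have v5 : jq.val % 2 = u.val := congrArg Fin.val h5
      rw [v2] at v3
      have hjqlt : jq.val / 2 < n' := by have := jq.isLt; omega
      have v6 : (i'.val * s' + dd s' n' i'.val (jq.val / 2)) % n' = jq.val / 2 :=
        dd_patB hn' _ _ hjqlt
      rw [v3] at v6
      refine Prod.ext h1 (Prod.ext ?_ ?_)
      · apply Fin.ext; simp only; omega
      · apply Fin.ext; simp only; omega
  · -- row counts
    intro t i
    have hi2 : i.val / 2 < m' := by have := i.isLt; omega
    rw [Finset.card_filter]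
    rw [sum_pair _ (fun j' _ => if dd s' n' (i.val / 2) j'.val < s' then 1 else 0) ?_]
    · rw [Finset.sum_add_distrib]
      rw [← Finset.card_filter, dd_rowcard hs' hsn]
      omega
    · intro j' u h
      have e3 : (2 * j'.val + u.val) / 2 = j'.val := by have := u.isLt; omega
      simp only [Fin.val_mk, e3]
      by_cases hd : dd s' n' (i.val / 2) j'.val < s'
      · rw [dif_pos hd, if_pos hd]; simp
      · rw [dif_neg hd, if_neg hd]; simp
  · -- column counts
    intro t j
    have hj2 : j.val / 2 < n' := by have := j.isLt; omega
    rw [Finset.card_filter]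
    rw [sum_pair _ (fun i' _ => if dd s' n' i'.val (j.val / 2) < s' then 1 else 0) ?_]
    · rw [Finset.sum_add_distrib, ← Finset.card_filter, dd_colcard hs' hsn heq _ hj2]
      omega
    · intro i' r h
      have e1 : (2 * i'.val + r.val) / 2 = i'.val := by have := r.isLt; omega
      simp only [Fin.val_mk, e1]
      by_cases hd : dd s' n' i'.val (j.val / 2) < s'
      · rw [dif_pos hd, if_pos hd]; simp
      · rw [dif_neg hd, if_neg hd]; simp
  · -- constant sums
    refine ⟨s' • α, k' • (α + ε), ?_, ?_⟩
    · intro t i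
      have hi2 : i.val / 2 < m' := by have := i.isLt; omega
      rw [sum_pair _ (fun (j' : Fin n') (u : Fin 2) =>
        (if h : dd s' n' (i.val / 2) j'.val < s' then
          some (w ((t, ⟨i.val / 2, hi2⟩, ⟨dd s' n' (i.val / 2) j'.val, h⟩),
            ⟨i.val % 2, by omega⟩, u)) else none).getD 0) ?_]
      · have key : ∀ j' : Fin n',
            ((if h : dd s' n' (i.val / 2) j'.val < s' then
              some (w ((t, ⟨i.val / 2, hi2⟩, ⟨dd s' n' (i.val / 2) j'.val, h⟩),
                ⟨i.val % 2, by omega⟩, (0 : Fin 2))) else none).getD 0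
            + (if h : dd s' n' (i.val / 2) j'.val < s' then
              some (w ((t, ⟨i.val / 2, hi2⟩, ⟨dd s' n' (i.val / 2) j'.val, h⟩),
                ⟨i.val % 2, by omega⟩, (1 : Fin 2))) else none).getD 0)
            = if dd s' n' (i.val / 2) j'.val < s' then α else 0 := by
          intro j'
          by_cases hd : dd s' n' (i.val / 2) j'.val < s'
          · rw [dif_pos hd, dif_pos hd, if_pos hd, Option.getD_some, Option.getD_some]
            exact hwrow _ _
          · rw [dif_neg hd, dif_neg hd, if_neg hd]
            simp
        rw [Finset.sum_congr rfl fun j' _ => key j']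
        rw [Finset.sum_ite, Finset.sum_const, Finset.sum_const_zero, add_zero,
          dd_rowcard hs' hsn]
      · intro j' u h
        have e3 : (2 * j'.val + u.val) / 2 = j'.val := by have := u.isLt; omega
        have e4 : (2 * j'.val + u.val) % 2 = u.val := by have := u.isLt; omega
        simp only [Fin.val_mk, e3, e4, Fin.eta]
    · intro t j
      have hj2 : j.val / 2 < n' := by have := j.isLt; omega
      rw [sum_pair _ (fun (i' : Fin m') (r : Fin 2) =>
        (if h : dd s' n' i'.val (j.val / 2) < s' then
          some (w ((t, i', ⟨dd s' n' i'.val (j.val / 2), h⟩),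
            r, ⟨j.val % 2, by omega⟩)) else none).getD 0) ?_]
      · have key : ∀ i' : Fin m',
            ((if h : dd s' n' i'.val (j.val / 2) < s' then
              some (w ((t, i', ⟨dd s' n' i'.val (j.val / 2), h⟩),
                (0 : Fin 2), ⟨j.val % 2, by omega⟩)) else none).getD 0
            + (if h : dd s' n' i'.val (j.val / 2) < s' then
              some (w ((t, i', ⟨dd s' n' i'.val (j.val / 2), h⟩),
                (1 : Fin 2), ⟨j.val % 2, by omega⟩)) else none).getD 0)
            = if dd s' n' i'.val (j.val / 2) < s' then α + ε else 0 := by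
          intro i'
          by_cases hd : dd s' n' i'.val (j.val / 2) < s'
          · rw [dif_pos hd, dif_pos hd, if_pos hd, Option.getD_some, Option.getD_some]
            exact hwcol _ _
          · rw [dif_neg hd, dif_neg hd, if_neg hd]
            simp
        rw [Finset.sum_congr rfl fun i' _ => key i']
        rw [Finset.sum_ite, Finset.sum_const, Finset.sum_const_zero, add_zero,
          dd_colcard hs' hsn heq _ hj2]
      · intro i' r h
        have e1 : (2 * i'.val + r.val) / 2 = i'.val := by have := r.isLt; omega
        have e2' : (2 * i'.val + r.val) % 2 = r.val := by have := r.isLt; omega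
        simp only [Fin.val_mk, e1, e2', Fin.eta]

/-- Let `m,n,s,k` be even integers with `2 ≤ s ≤ n`, `2 ≤ k ≤ m` and `m·s = n·k`, and let
`c ≥ 1`. For every abelian group `Γ` of order `n·k·c` there exists an `MRS_Γ(m,n;s,k;c)`. -/
theorem stmt14 (m n s k c : ℕ) (hme : Even m) (hne : Even n) (hse : Even s) (hke : Even k)
    (hs : 2 ≤ s) (hsn : s ≤ n) (hk : 2 ≤ k) (hkm : k ≤ m) (heq : m * s = n * k)
    (hc : 1 ≤ c)
    (Γ : Type*) [AddCommGroup Γ] [Fintype Γ] (hcard : Fintype.card Γ = n * k * c) :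
    ∃ A : Fin c → Fin m → Fin n → Option Γ, IsPartialMRS m n s k c A := by
  obtain ⟨m', rfl⟩ : ∃ a, m = 2 * a := ⟨m / 2, by obtain ⟨r, hr⟩ := hme; omega⟩
  obtain ⟨n', rfl⟩ : ∃ a, n = 2 * a := ⟨n / 2, by obtain ⟨r, hr⟩ := hne; omega⟩
  obtain ⟨s', rfl⟩ : ∃ a, s = 2 * a := ⟨s / 2, by obtain ⟨r, hr⟩ := hse; omega⟩
  obtain ⟨k', rfl⟩ : ∃ a, k = 2 * a := ⟨k / 2, by obtain ⟨r, hr⟩ := hke; omega⟩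
  have heq' : m' * s' = n' * k' := by
    have h4 : 4 * (m' * s') = 4 * (n' * k') := by
      calc 4 * (m' * s') = 2 * m' * (2 * s') := by ring
        _ = 2 * n' * (2 * k') := heq
        _ = 4 * (n' * k') := by ring
    omega
  exact main_aux m' n' s' k' c (by omega) (by omega) (by omega) (by omega) heq' Γ
    (by rw [hcard])
end

section
/- Let m, n, s, k be integers such that 2 ≤ s ≤ n, 2 ≤ k ≤ m and m·s = n·k, let c ≥ 1, let Γ be a finite abelian group of order n·k·c, and set d = gcd(s,k) (so that k divides m·d and m·d·c/k is a positive integer). If there exists a Γ-magic rectangle set MRS_Γ(k/d, s; m·d·c/k), then there exists a Γ-magic rectangle set MRS_Γ(m,n;s,k;c). -/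
open Finset

/-- A Γ-magic rectangle set `MRS_Γ(a,b;c)` on fully filled arrays. -/
def IsFullMRS {Γ : Type*} [AddCommGroup Γ] (a b c : ℕ)
    (A : Fin c → Fin a → Fin b → Γ) : Prop :=
  (Function.Bijective fun p : Fin c × Fin a × Fin b => A p.1 p.2.1 p.2.2) ∧
  ∃ ω δ : Γ,
    (∀ t : Fin c, ∀ i : Fin a, (∑ j : Fin b, A t i j) = ω) ∧
    (∀ t : Fin c, ∀ j : Fin b, (∑ i : Fin a, A t i j) = δ)


lemma aux1 (n z y : ℕ) (hz : z < n) (hy : y < n) : (n + (z + y) % n - z) % n = y := by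
  rcases Nat.lt_or_ge (z + y) n with h | h
  · rw [Nat.mod_eq_of_lt h]
    have e : n + (z + y) - z = n + y := by omega
    rw [e, Nat.add_mod_left, Nat.mod_eq_of_lt hy]
  · have h2 : (z + y) % n = z + y - n := by
      rw [Nat.mod_eq_sub_mod h, Nat.mod_eq_of_lt (by omega)]
    rw [h2]
    have e : n + (z + y - n) - z = y := by omega
    rw [e, Nat.mod_eq_of_lt hy]

lemma aux2 (n z j : ℕ) (hz : z < n) (hj : j < n) : (z + (n + j - z) % n) % n = j := by
  rcases Nat.lt_or_ge j z with h | h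
  · have e1 : (n + j - z) % n = n + j - z := Nat.mod_eq_of_lt (by omega)
    rw [e1]
    have e : z + (n + j - z) = n + j := by omega
    rw [e, Nat.add_mod_left, Nat.mod_eq_of_lt hj]
  · have e0 : n + j - z - n = j - z := by omega
    have e1 : (n + j - z) % n = j - z := by
      rw [Nat.mod_eq_sub_mod (by omega), e0, Nat.mod_eq_of_lt (by omega)]
    rw [e1]
    have e : z + (j - z) = j := by omega
    rw [e, Nat.mod_eq_of_lt hj]

lemma auxcount (n d j : ℕ) (hn : 0 < n) (hj : j < n) :
    ((Finset.range (n * d)).filter (fun p => p % n = j)).card = d := by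
  have himg : (Finset.range (n * d)).filter (fun p => p % n = j)
      = (Finset.range d).image (fun i => j + i * n) := by
    ext p
    simp only [Finset.mem_filter, Finset.mem_range, Finset.mem_image]
    constructor
    · rintro ⟨hp, hmod⟩
      refine ⟨p / n, ?_, ?_⟩
      · have := (Nat.div_lt_iff_lt_mul hn).2 (show p < d * n from by rwa [Nat.mul_comm d n])
        omega
      · have h1 := Nat.div_add_mod p n
        have h2 : n * (p / n) = (p / n) * n := by ring
        omega
    · rintro ⟨i, hi, rfl⟩
      constructor
      · have h1 : (i + 1) * n ≤ d * n := Nat.mul_le_mul_right n (by omega)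
        have h2 : (i+1) * n = i * n + n := by ring
        have h3 : n * d = d * n := by ring
        omega
      · rw [Nat.add_mul_mod_self_right, Nat.mod_eq_of_lt hj]
  rw [himg, Finset.card_image_of_injective _ ?_, Finset.card_range]
  intro x y hxy
  simp only at hxy
  have : x * n = y * n := by omega
  exact Nat.eq_of_mul_eq_mul_right hn this

lemma auxcols (n s q d j : ℕ) (hn : 0 < n) (hs : 0 < s) (hsn : s ≤ n)
    (hqs : q * s = n * d) (hj : j < n) :
    ((Finset.range q).filter (fun r => (n + j - (r * s) % n) % n < s)).card = d := by
  rw [← auxcount n d j hn hj]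
  apply Finset.card_bij' (fun r _ => r * s + (n + j - (r * s) % n) % n)
      (fun p _ => p / s)
  · intro r hr
    simp only [Finset.mem_filter, Finset.mem_range] at hr ⊢
    obtain ⟨hrq, hcond⟩ := hr
    constructor
    · have h1 : (r + 1) * s ≤ q * s := Nat.mul_le_mul_right s (by omega)
      have h2 : (r + 1) * s = r * s + s := by ring
      omega
    · have hz : r * s % n < n := Nat.mod_lt _ hn
      have hy : (n + j - r * s % n) % n < n := Nat.mod_lt _ hn
      rw [Nat.add_mod (r*s), Nat.mod_eq_of_lt hy]
      exact aux2 n (r * s % n) j hz hj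
  · intro p hp
    simp only [Finset.mem_filter, Finset.mem_range] at hp ⊢
    obtain ⟨hpn, hmod⟩ := hp
    have hdiv : p / s < q := by
      have := (Nat.div_lt_iff_lt_mul hs).2 (show p < q * s from by omega)
      omega
    refine ⟨hdiv, ?_⟩
    have hz : p / s * s % n < n := Nat.mod_lt _ hn
    have hy : p % s < s := Nat.mod_lt _ hs
    have hp2 : p / s * s + p % s = p := Nat.div_add_mod' p s
    have key : (n + j - p / s * s % n) % n = p % s := by
      have h1 := aux1 n (p / s * s % n) (p % s) hz (by omega)
      have e1 : (p / s * s % n + p % s) % n = j := by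
        conv_lhs => rw [show p % s = p % s % n from (Nat.mod_eq_of_lt (show p % s < n by omega)).symm]
        rw [← Nat.add_mod, hp2, hmod]
      rw [e1] at h1; exact h1
    omega
  · intro r hr
    simp only [Finset.mem_filter, Finset.mem_range] at hr
    have hy : (n + j - r * s % n) % n < s := hr.2
    have e : r * s + (n + j - r * s % n) % n = (n + j - r * s % n) % n + s * r := by ring
    rw [e, Nat.add_mul_div_left _ _ hs, Nat.div_eq_of_lt hy, Nat.zero_add]
  · intro p hp
    simp only [Finset.mem_filter, Finset.mem_range] at hp
    obtain ⟨hpn, hmod⟩ := hp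
    have hz : p / s * s % n < n := Nat.mod_lt _ hn
    have hy : p % s < s := Nat.mod_lt _ hs
    have hp2 : p / s * s + p % s = p := Nat.div_add_mod' p s
    have key : (n + j - p / s * s % n) % n = p % s := by
      have h1 := aux1 n (p / s * s % n) (p % s) hz (by omega)
      have e1 : (p / s * s % n + p % s) % n = j := by
        conv_lhs => rw [show p % s = p % s % n from (Nat.mod_eq_of_lt (show p % s < n by omega)).symm]
        rw [← Nat.add_mod, hp2, hmod]
      rw [e1] at h1; exact h1
    omega


lemma fin3_congr {α : Type*} {p q r : ℕ} (B : Fin p → Fin q → Fin r → α)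
    {u u' : Fin p} {x x' : Fin q} {y y' : Fin r}
    (h1 : (u : ℕ) = u') (h2 : (x : ℕ) = x') (h3 : (y : ℕ) = y') : B u x y = B u' x' y' := by
  obtain rfl : u = u' := Fin.ext h1
  obtain rfl : x = x' := Fin.ext h2
  obtain rfl : y = y' := Fin.ext h3
  rfl

lemma auxrow (n s z : ℕ) (hn : 0 < n) (hsn : s ≤ n) (hz : z < n) :
    ((Finset.univ : Finset (Fin n)).filter (fun j => (n + j.val - z) % n < s)).card = s := by
  have h := Finset.card_bij'
    (s := Finset.univ.filter (fun j : Fin n => (n + j.val - z) % n < s))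
    (t := (Finset.univ : Finset (Fin s)))
    (fun j hj => ⟨(n + j.val - z) % n, by simpa using hj⟩)
    (fun y _ => ⟨(z + y.val) % n, Nat.mod_lt _ hn⟩)
    (fun j hj => Finset.mem_univ _)
    (fun y hy => by
      simp only [Finset.mem_filter, Finset.mem_univ, true_and]
      rw [aux1 n z y.val hz (by omega)]; exact y.isLt)
    (fun j hj => Fin.ext (aux2 n z j.val hz j.isLt))
    (fun y hy => Fin.ext (aux1 n z y.val hz (by omega)))
  rw [h]; simp

lemma auxsum_row {M : Type*} [AddCommMonoid M] (n s z : ℕ) (hn : 0 < n) (hsn : s ≤ n)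
    (hz : z < n) (f : Fin s → M) :
    (∑ j : Fin n, if h : (n + j.val - z) % n < s then f ⟨(n + j.val - z) % n, h⟩ else 0)
      = ∑ y : Fin s, f y := by
  rw [← Finset.sum_filter_add_sum_filter_not Finset.univ
      (fun j : Fin n => (n + j.val - z) % n < s)]
  have h0 : ∑ j ∈ Finset.univ.filter (fun j : Fin n => ¬ (n + j.val - z) % n < s),
      (if h : (n + j.val - z) % n < s then f ⟨(n + j.val - z) % n, h⟩ else 0) = 0 := by
    apply Finset.sum_eq_zero
    intro j hj
    simp only [Finset.mem_filter, Finset.mem_univ, true_and] at hj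
    rw [dif_neg hj]
  rw [h0, add_zero]
  refine Finset.sum_bij'
    (fun j hj => (⟨(n + j.val - z) % n, by simpa using hj⟩ : Fin s))
    (fun y _ => (⟨(z + y.val) % n, Nat.mod_lt _ hn⟩ : Fin n))
    (fun j hj => Finset.mem_univ _)
    (fun y hy => by
      simp only [Finset.mem_filter, Finset.mem_univ, true_and]
      rw [aux1 n z y.val hz (by omega)]; exact y.isLt)
    (fun j hj => Fin.ext (aux2 n z j.val hz j.isLt))
    (fun y hy => Fin.ext (aux1 n z y.val hz (by omega)))
    (fun j hj => ?_)
  have hj' : (n + j.val - z) % n < s := by simpa using hj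
  rw [dif_pos hj']

lemma auxsum_col {M : Type*} [AddCommMonoid M] (m a q : ℕ) (ha : 0 < a) (hqa : q * a = m)
    (P : ℕ → Prop) [DecidablePred P] (f : ℕ → ℕ → M) :
    (∑ i : Fin m, if P (i.val / a) then f (i.val / a) (i.val % a) else 0)
      = ∑ r ∈ (Finset.range q).filter P, ∑ x ∈ Finset.range a, f r x := by
  rw [← Finset.sum_filter_add_sum_filter_not Finset.univ (fun i : Fin m => P (i.val / a))]
  have h0 : ∑ i ∈ Finset.univ.filter (fun i : Fin m => ¬ P (i.val / a)),
      (if P (i.val / a) then f (i.val / a) (i.val % a) else 0) = 0 := by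
    apply Finset.sum_eq_zero
    intro i hi
    simp only [Finset.mem_filter, Finset.mem_univ, true_and] at hi
    rw [if_neg hi]
  rw [h0, add_zero, ← Finset.sum_product']
  have hdiv : ∀ (r x : ℕ), x < a → (r * a + x) / a = r := by
    intro r x hx
    have e : r * a + x = x + a * r := by ring
    rw [e, Nat.add_mul_div_left _ _ ha, Nat.div_eq_of_lt hx, Nat.zero_add]
  have hmod : ∀ (r x : ℕ), x < a → (r * a + x) % a = x := by
    intro r x hx
    have e : r * a + x = x + a * r := by ring
    rw [e, Nat.add_mul_mod_self_left, Nat.mod_eq_of_lt hx]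
  refine Finset.sum_bij'
    (fun i _ => ((i : Fin m).val / a, (i : Fin m).val % a))
    (fun p hp => (⟨p.1 * a + p.2, ?_⟩ : Fin m))
    ?_ ?_ ?_ ?_ ?_
  · simp only [Finset.mem_product, Finset.mem_filter, Finset.mem_range] at hp
    have h1 : (p.1 + 1) * a ≤ q * a := Nat.mul_le_mul_right a (by omega)
    have h2 : (p.1 + 1) * a = p.1 * a + a := by ring
    omega
  · intro i hi
    simp only [Finset.mem_filter, Finset.mem_univ, true_and] at hi
    simp only [Finset.mem_product, Finset.mem_filter, Finset.mem_range]
    refine ⟨⟨?_, hi⟩, Nat.mod_lt _ ha⟩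
    have h1 : (i : ℕ) < q * a := by rw [hqa]; exact i.isLt
    exact (Nat.div_lt_iff_lt_mul ha).2 h1
  · intro p hp
    simp only [Finset.mem_product, Finset.mem_filter, Finset.mem_range] at hp
    simp only [Finset.mem_filter, Finset.mem_univ, true_and]
    rw [hdiv p.1 p.2 hp.2]
    exact hp.1.2
  · intro i hi
    exact Fin.ext (Nat.div_add_mod' _ _)
  · intro p hp
    simp only [Finset.mem_product, Finset.mem_filter, Finset.mem_range] at hp
    obtain ⟨r, x⟩ := p
    simp only at hp ⊢
    rw [hdiv r x hp.2, hmod r x hp.2]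
  · intro i hi
    simp only [Finset.mem_filter, Finset.mem_univ, true_and] at hi
    rw [if_pos hi]

lemma auxcard_col (m a q : ℕ) (ha : 0 < a) (hqa : q * a = m)
    (P : ℕ → Prop) [DecidablePred P] :
    (Finset.univ.filter (fun i : Fin m => P (i.val / a))).card
      = ((Finset.range q).filter P).card * a := by
  have h := auxsum_col (M := ℕ) m a q ha hqa P (fun _ _ => 1)
  rw [Finset.card_filter, h]
  simp [Finset.sum_const]

/-- Let `2 ≤ s ≤ n`, `2 ≤ k ≤ m`, `m·s = n·k`, `c ≥ 1` and let `Γ` be an abelian group of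
order `n·k·c`. If there exists an `MRS_Γ(k/d, s; m·d·c/k)` where `d = gcd(s,k)`, then there
exists an `MRS_Γ(m,n;s,k;c)`. -/
theorem stmt15 (m n s k c : ℕ) (hs : 2 ≤ s) (hsn : s ≤ n) (hk : 2 ≤ k) (hkm : k ≤ m)
    (heq : m * s = n * k) (hc : 1 ≤ c)
    (Γ : Type*) [AddCommGroup Γ] [Fintype Γ] (hcard : Fintype.card Γ = n * k * c)
    (hex : ∃ A : Fin (m * Nat.gcd s k * c / k) → Fin (k / Nat.gcd s k) → Fin s → Γ,
      IsFullMRS (k / Nat.gcd s k) s (m * Nat.gcd s k * c / k) A) :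
    ∃ A : Fin c → Fin m → Fin n → Option Γ, IsPartialMRS m n s k c A := by
  set d := Nat.gcd s k with hdd
  set a := k / d with hadef
  set q := m / a with hqdef
  obtain ⟨B, hBbij, ω, δ, hBrow, hBcol⟩ := hex
  have hd : 0 < d := Nat.gcd_pos_of_pos_left _ (by omega)
  have hdk : d ∣ k := Nat.gcd_dvd_right s k
  have hds : d ∣ s := Nat.gcd_dvd_left s k
  have had : a * d = k := Nat.div_mul_cancel hdk
  have ha : 0 < a := by
    rcases Nat.eq_zero_or_pos a with h | h
    · rw [h] at had; omega
    · exact h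
  have hn : 0 < n := by omega
  have hm : 0 < m := by omega
  have hcop : Nat.Coprime (s / d) a := Nat.coprime_div_gcd_div_gcd hd
  have haDvd : a ∣ m := by
    have h1 : m * (s / d) = n * a := by
      have h2 : m * (s / d) * d = n * a * d := by
        rw [Nat.mul_assoc, Nat.div_mul_cancel hds, Nat.mul_assoc, had, heq]
      exact Nat.eq_of_mul_eq_mul_right hd h2
    have h2 : a ∣ m * (s / d) := ⟨n, by rw [h1]; ring⟩
    exact Nat.Coprime.dvd_of_dvd_mul_right (Nat.Coprime.symm hcop) h2
  have hqa : q * a = m := Nat.div_mul_cancel haDvd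
  have hq : 0 < q := by
    rcases Nat.eq_zero_or_pos q with h | h
    · rw [h] at hqa; omega
    · exact h
  have hqs : q * s = n * d := by
    have h1 : q * s * a = n * d * a := by
      calc q * s * a = q * a * s := by ring
        _ = m * s := by rw [hqa]
        _ = n * k := heq
        _ = n * (a * d) := by rw [had]
        _ = n * d * a := by ring
    exact Nat.eq_of_mul_eq_mul_right ha h1
  have hc' : m * d * c / k = q * c := by
    have h1 : m * d * c = q * c * k := by
      calc m * d * c = q * a * d * c := by rw [hqa]
        _ = q * c * (a * d) := by ring
        _ = q * c * k := by rw [had]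
    rw [h1, Nat.mul_div_cancel _ (show 0 < k by omega)]
  have hia : ∀ i : Fin m, i.val / a < q := by
    intro i
    have h1 : (i : ℕ) < q * a := by rw [hqa]; exact i.isLt
    exact (Nat.div_lt_iff_lt_mul ha).2 h1
  have hidx : ∀ (t : Fin c) (i : Fin m), t.val * q + i.val / a < m * d * c / k := by
    intro t i
    rw [hc']
    have h1 := hia i
    have h2 : (t.val + 1) * q ≤ c * q := Nat.mul_le_mul_right q t.isLt
    have h3 : (t.val + 1) * q = t.val * q + q := by ring
    have h4 : c * q = q * c := by ring
    omega
  have hidx2 : ∀ (t r : ℕ), t < c → r < q → t * q + r < m * d * c / k := by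
    intro t r ht hr
    rw [hc']
    have h2 : (t + 1) * q ≤ c * q := Nat.mul_le_mul_right q ht
    have h3 : (t + 1) * q = t * q + q := by ring
    have h4 : c * q = q * c := by ring
    omega
  have hdiva : ∀ (r x : ℕ), x < a → (r * a + x) / a = r := by
    intro r x hx
    have e : r * a + x = x + a * r := by ring
    rw [e, Nat.add_mul_div_left _ _ ha, Nat.div_eq_of_lt hx, Nat.zero_add]
  have hmoda : ∀ (r x : ℕ), x < a → (r * a + x) % a = x := by
    intro r x hx
    have e : r * a + x = x + a * r := by ring
    rw [e, Nat.add_mul_mod_self_left, Nat.mod_eq_of_lt hx]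
  have hdivq : ∀ (t r : ℕ), r < q → (t * q + r) / q = t := by
    intro t r hr
    have e : t * q + r = r + q * t := by ring
    rw [e, Nat.add_mul_div_left _ _ hq, Nat.div_eq_of_lt hr, Nat.zero_add]
  have hmodq : ∀ (t r : ℕ), r < q → (t * q + r) % q = r := by
    intro t r hr
    have e : t * q + r = r + q * t := by ring
    rw [e, Nat.add_mul_mod_self_left, Nat.mod_eq_of_lt hr]
  refine ⟨fun t i j =>
    if h : (n + j.val - (i.val / a * s) % n) % n < s then
      some (B ⟨t.val * q + i.val / a, hidx t i⟩ ⟨i.val % a, Nat.mod_lt _ ha⟩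
              ⟨(n + j.val - (i.val / a * s) % n) % n, h⟩)
    else none, ?_, ?_, ?_, ?_⟩
  · -- uniqueness
    intro g
    obtain ⟨⟨u, x, y⟩, hB, hBu⟩ := hBbij.existsUnique g
    simp only at hB
    have hu : u.val < q * c := by have h1 := u.isLt; omega
    have ht0 : u.val / q < c := by
      have h1 : u.val < c * q := by rw [Nat.mul_comm c q]; exact hu
      exact (Nat.div_lt_iff_lt_mul hq).2 h1
    have hr0 : u.val % q < q := Nat.mod_lt _ hq
    have hi0 : u.val % q * a + x.val < m := by
      have h1 : (u.val % q + 1) * a ≤ q * a := Nat.mul_le_mul_right a hr0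
      have h2 : (u.val % q + 1) * a = u.val % q * a + a := by ring
      have h3 := x.isLt
      omega
    have hj0 : (u.val % q * s + y.val) % n < n := Nat.mod_lt _ hn
    have e1 : (u.val % q * a + x.val) / a = u.val % q := hdiva _ _ x.isLt
    have e2 : (u.val % q * a + x.val) % a = x.val := hmoda _ _ x.isLt
    have e3 : u.val / q * q + u.val % q = u.val := Nat.div_add_mod' u.val q
    have hz : (u.val % q * s) % n < n := Nat.mod_lt _ hn
    have ej : (u.val % q * s + y.val) % n = ((u.val % q * s) % n + y.val) % n := by
      rw [Nat.add_mod, Nat.mod_eq_of_lt (show y.val < n by omega)]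
    have econd : (n + (u.val % q * s + y.val) % n - (u.val % q * s) % n) % n = y.val := by
      rw [ej]; exact aux1 n _ y.val hz (by omega)
    refine ⟨(⟨u.val / q, ht0⟩, ⟨u.val % q * a + x.val, hi0⟩,
        ⟨(u.val % q * s + y.val) % n, hj0⟩), ?_, ?_⟩
    · simp only [e1, e2, econd]
      rw [dif_pos y.isLt, ← hB]
      exact congrArg some (fin3_congr B e3 rfl rfl)
    · rintro ⟨t', i', j'⟩ hp'
      simp only at hp'
      by_cases hcnd : (n + j'.val - (i'.val / a * s) % n) % n < s
      · rw [dif_pos hcnd] at hp'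
        have hg : B ⟨t'.val * q + i'.val / a, hidx t' i'⟩ ⟨i'.val % a, Nat.mod_lt _ ha⟩
            ⟨(n + j'.val - (i'.val / a * s) % n) % n, hcnd⟩ = g := Option.some.inj hp'
        have heq3 := hBu (⟨t'.val * q + i'.val / a, hidx t' i'⟩,
            ⟨i'.val % a, Nat.mod_lt _ ha⟩,
            ⟨(n + j'.val - (i'.val / a * s) % n) % n, hcnd⟩) hg
        have h1 : t'.val * q + i'.val / a = u.val := congrArg (fun p => (p.1 : ℕ)) heq3
        have h2 : i'.val % a = x.val := congrArg (fun p => (p.2.1 : ℕ)) heq3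
        have h3 : (n + j'.val - (i'.val / a * s) % n) % n = y.val :=
          congrArg (fun p => (p.2.2 : ℕ)) heq3
        have hr' : i'.val / a < q := hia i'
        have ht' : t'.val = u.val / q := by rw [← h1, hdivq _ _ hr']
        have hrr : i'.val / a = u.val % q := by rw [← h1, hmodq _ _ hr']
        have hi' : i'.val = u.val % q * a + x.val := by
          rw [← hrr, ← h2]; exact (Nat.div_add_mod' _ _).symm
        have hz' : (i'.val / a * s) % n < n := Nat.mod_lt _ hn
        have e4 : ((i'.val / a * s) % n + (n + j'.val - (i'.val / a * s) % n) % n) % n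
            = j'.val := aux2 n _ j'.val hz' j'.isLt
        rw [h3] at e4
        have hj' : j'.val = (u.val % q * s + y.val) % n := by
          rw [ej, ← hrr, e4]
        exact Prod.ext (Fin.ext ht') (Prod.ext (Fin.ext hi') (Fin.ext hj'))
      · rw [dif_neg hcnd] at hp'
        exact absurd hp' (by simp)
  · -- row counts
    intro t i
    have e : ∀ j : Fin n, ((fun t i (j : Fin n) =>
        if h : (n + j.val - (i.val / a * s) % n) % n < s then
          some (B ⟨t.val * q + i.val / a, hidx t i⟩ ⟨i.val % a, Nat.mod_lt _ ha⟩
              ⟨(n + j.val - (i.val / a * s) % n) % n, h⟩)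
        else none) t i j).isSome = ((n + j.val - (i.val / a * s) % n) % n < s : Prop) := by
      intro j
      by_cases h : (n + j.val - (i.val / a * s) % n) % n < s <;> simp [h]
    rw [Finset.filter_congr (fun j _ => by rw [e j])]
    exact auxrow n s _ hn hsn (Nat.mod_lt _ hn)
  · -- column counts
    intro t j
    have e : ∀ i : Fin m, ((fun t i (j : Fin n) =>
        if h : (n + j.val - (i.val / a * s) % n) % n < s then
          some (B ⟨t.val * q + i.val / a, hidx t i⟩ ⟨i.val % a, Nat.mod_lt _ ha⟩
              ⟨(n + j.val - (i.val / a * s) % n) % n, h⟩)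
        else none) t i j).isSome = ((n + j.val - (i.val / a * s) % n) % n < s : Prop) := by
      intro i
      by_cases h : (n + j.val - (i.val / a * s) % n) % n < s <;> simp [h]
    rw [Finset.filter_congr (fun i _ => by rw [e i])]
    refine Eq.trans (auxcard_col m a q ha hqa
        (fun r => (n + j.val - (r * s) % n) % n < s)) ?_
    rw [auxcols n s q d j.val hn (by omega) hsn hqs j.isLt]
    rw [Nat.mul_comm]; exact had
  · -- sums
    refine ⟨ω, d • δ, ?_, ?_⟩
    · intro t i
      have e : ∀ j : Fin n, (((fun t i (j : Fin n) =>
          if h : (n + j.val - (i.val / a * s) % n) % n < s then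
            some (B ⟨t.val * q + i.val / a, hidx t i⟩ ⟨i.val % a, Nat.mod_lt _ ha⟩
                ⟨(n + j.val - (i.val / a * s) % n) % n, h⟩)
          else none) t i j).getD 0)
          = if h : (n + j.val - (i.val / a * s) % n) % n < s then
              B ⟨t.val * q + i.val / a, hidx t i⟩ ⟨i.val % a, Nat.mod_lt _ ha⟩
                ⟨(n + j.val - (i.val / a * s) % n) % n, h⟩
            else 0 := by
        intro j
        by_cases h : (n + j.val - (i.val / a * s) % n) % n < s
        · simp only [dif_pos h, Option.getD_some]
        · simp only [dif_neg h, Option.getD_none]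
      rw [Finset.sum_congr rfl (fun j _ => e j)]
      rw [auxsum_row n s ((i.val / a * s) % n) hn hsn (Nat.mod_lt _ hn)
          (B ⟨t.val * q + i.val / a, hidx t i⟩ ⟨i.val % a, Nat.mod_lt _ ha⟩)]
      exact hBrow _ _
    · intro t j
      have e : ∀ i : Fin m, (((fun t i (j : Fin n) =>
          if h : (n + j.val - (i.val / a * s) % n) % n < s then
            some (B ⟨t.val * q + i.val / a, hidx t i⟩ ⟨i.val % a, Nat.mod_lt _ ha⟩
                ⟨(n + j.val - (i.val / a * s) % n) % n, h⟩)
          else none) t i j).getD 0)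
          = if (n + j.val - (i.val / a * s) % n) % n < s then
              (fun r x => if h : r < q ∧ x < a ∧ (n + j.val - (r * s) % n) % n < s then
                B ⟨t.val * q + r, hidx2 _ _ t.isLt h.1⟩ ⟨x, h.2.1⟩
                  ⟨(n + j.val - (r * s) % n) % n, h.2.2⟩
              else 0) (i.val / a) (i.val % a)
            else 0 := by
        intro i
        by_cases h : (n + j.val - (i.val / a * s) % n) % n < s
        · simp only [dif_pos h, Option.getD_some, if_pos h]
          rw [dif_pos ⟨hia i, Nat.mod_lt _ ha, h⟩]
        · simp only [dif_neg h, Option.getD_none, if_neg h]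
      rw [Finset.sum_congr rfl (fun i _ => e i)]
      refine Eq.trans (auxsum_col m a q ha hqa
          (fun r => (n + j.val - (r * s) % n) % n < s)
          (fun r x => if h : r < q ∧ x < a ∧ (n + j.val - (r * s) % n) % n < s then
            B ⟨t.val * q + r, hidx2 _ _ t.isLt h.1⟩ ⟨x, h.2.1⟩
              ⟨(n + j.val - (r * s) % n) % n, h.2.2⟩
          else 0)) ?_
      have inner : ∀ r ∈ (Finset.range q).filter
          (fun r => (n + j.val - (r * s) % n) % n < s),
          (∑ x ∈ Finset.range a, (fun r x =>
            if h : r < q ∧ x < a ∧ (n + j.val - (r * s) % n) % n < s then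
              B ⟨t.val * q + r, hidx2 _ _ t.isLt h.1⟩ ⟨x, h.2.1⟩
                ⟨(n + j.val - (r * s) % n) % n, h.2.2⟩
            else 0) r x) = δ := by
        intro r hr
        simp only [Finset.mem_filter, Finset.mem_range] at hr
        obtain ⟨hrq, hP⟩ := hr
        rw [Finset.sum_range]
        have e2 : ∀ x : Fin a, (if h : r < q ∧ x.val < a ∧ (n + j.val - (r * s) % n) % n < s then
              B ⟨t.val * q + r, hidx2 _ _ t.isLt h.1⟩ ⟨x.val, h.2.1⟩
                ⟨(n + j.val - (r * s) % n) % n, h.2.2⟩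
            else 0)
            = B ⟨t.val * q + r, hidx2 _ _ t.isLt hrq⟩ x ⟨(n + j.val - (r * s) % n) % n, hP⟩ := by
          intro x
          rw [dif_pos ⟨hrq, x.isLt, hP⟩]
        rw [Finset.sum_congr rfl (fun x _ => e2 x)]
        exact hBcol _ _
      rw [Finset.sum_congr rfl inner, Finset.sum_const]
      rw [auxcols n s q d j.val hn (by omega) hsn hqs j.isLt]
end

section
/- Let m, n, s, k be integers such that 2 ≤ s ≤ n, 2 ≤ k ≤ m and m·s = n·k, let c ≥ 1 and let Γ be a finite abelian group of order n·k·c. Then there exists a Γ-magic rectangle set MRS_Γ(m,n;s,k;c) in each of the following cases: (1) s ≡ k ≡ 0 (mod 4); (2) s ≡ 2 (mod 4) and k ≡ 0 (mod 4); (3) s ≡ 0 (mod 4) and k ≡ 2 (mod 4); (4) s ≡ k ≡ 2 (mod 4) and m ≡ n ≡ 0 (mod 2). -/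
open Finset

private lemma int_mul_eq_zero_of (nn z : ℤ) (h0 : 0 < nn) (h1 : -nn < nn*z) (h2 : nn*z < nn) :
    nn * z = 0 := by
  have hz1 : z < 1 := lt_of_mul_lt_mul_left (by simpa using h2) (le_of_lt h0)
  have hz2 : -1 < z := by
    have : nn * (-1) < nn * z := by simpa using h1
    exact lt_of_mul_lt_mul_left this (le_of_lt h0)
  have : z = 0 := by omega
  simp [this]

private lemma count_mod (M D r : ℕ) (hr : r < M) :
    ((range (M*D)).filter (fun t => t % M = r)).card = D := by
  induction D with
  | zero => simp
  | succ D ih =>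
    have h1 : M * (D+1) = M*D + M := by ring
    rw [h1, Finset.range_add, Finset.filter_union, Finset.card_union_of_disjoint]
    · rw [ih]
      have : (filter (fun t => t % M = r) (map (addLeftEmbedding (M*D)) (range M))).card = 1 := by
        rw [Finset.filter_map, Finset.card_map]
        have : filter ((fun t => t % M = r) ∘ (addLeftEmbedding (M*D))) (range M)
            = filter (fun t => t = r) (range M) := by
          apply Finset.filter_congr
          intro x hx
          simp only [mem_range] at hx
          simp only [Function.comp, addLeftEmbedding_apply]
          constructor
          · intro h
            have h2 : (M*D + x) % M = x % M := by
              have : M*D + x = x + D * M := by ring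
              rw [this, Nat.add_mul_mod_self_right]
            rw [h2, Nat.mod_eq_of_lt hx] at h
            simp [h]
          · intro h
            have hxr : x = r := by simpa using h
            rw [hxr]
            have : M*D + r = r + D * M := by ring
            rw [this, Nat.add_mul_mod_self_right, Nat.mod_eq_of_lt hr]
        rw [this, Finset.filter_eq']
        simp [mem_range, hr]
      omega
    · apply Finset.disjoint_filter_filter
      rw [Finset.disjoint_left]
      intro a ha hb
      simp only [mem_range] at ha
      simp only [Finset.mem_map, mem_range, addLeftEmbedding_apply] at hb
      omega

private lemma count_div (H U v : ℕ) (hH : 0 < H) (hv : v < U) :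
    ((range (H*U)).filter (fun x => x/H = v)).card = H := by
  have : (range (H*U)).filter (fun x => x/H = v) = Ico (H*v) (H*v + H) := by
    ext x
    simp only [mem_filter, mem_range, mem_Ico]
    constructor
    · rintro ⟨hx, hdiv⟩
      have h1 := Nat.div_add_mod x H
      have h2 := Nat.mod_lt x hH
      have h3 : H * (x/H) = H * v := by rw [hdiv]
      constructor
      · omega
      · omega
    · rintro ⟨h1, h2⟩
      have hd : x / H = v := by
        apply Nat.div_eq_of_lt_le
        · rw [Nat.mul_comm]; exact h1
        · calc x < H*v + H := h2
            _ = (v+1)*H := by ring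
      refine ⟨?_, hd⟩
      calc x < H*v + H := h2
        _ = H*(v+1) := by ring
        _ ≤ H*U := Nat.mul_le_mul_left H (by omega)
  rw [this, Nat.card_Ico]
  omega


private lemma coprime_two (n : ℕ) (hn : n % 2 = 1) : Nat.gcd 2 n = 1 := by
  have h1 : Nat.gcd 2 n ∣ 2 := Nat.gcd_dvd_left 2 n
  have h2 : Nat.gcd 2 n ∣ n := Nat.gcd_dvd_right 2 n
  rcases (Nat.dvd_prime Nat.prime_two).mp h1 with h|h
  · exact h
  · rw [h] at h2
    omega

private lemma count_col_odd (n D j d : ℕ) (hn : n % 2 = 1) (hj : j < n) (hd : d < 2) :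
    ((range (n*D)).filter (fun x => (2*x+d) % n = j)).card = D := by
  have hn0 : 0 < n := by omega
  set x₀ := (((n+1)/2) * (n + j - d)) % n with hx₀
  have hx₀lt : x₀ < n := Nat.mod_lt _ hn0
  have hsol : (2*x₀ + d) % n = j := by
    have h2c : 2 * ((n+1)/2) = n + 1 := by omega
    have e1 : 2 * x₀ ≡ 2 * (((n+1)/2) * (n + j - d)) [MOD n] :=
      Nat.ModEq.mul_left 2 (Nat.mod_modEq _ n)
    have e2 : 2 * (((n+1)/2) * (n + j - d)) = (n+1) * (n + j - d) := by
      calc 2 * (((n+1)/2) * (n + j - d)) = (2*((n+1)/2)) * (n + j - d) := by ring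
        _ = (n+1) * (n + j - d) := by rw [h2c]
    have e3 : (n+1) * (n + j - d) ≡ 1 * (n + j - d) [MOD n] := by
      apply Nat.ModEq.mul_right
      simpa using Nat.add_mod_left n 1
    have e4 : 2 * x₀ + d ≡ (n + j - d) + d [MOD n] := by
      refine Nat.ModEq.add_right d ?_
      calc 2*x₀ ≡ 2 * (((n+1)/2) * (n + j - d)) [MOD n] := e1
        _ = (n+1) * (n + j - d) := e2
        _ ≡ 1 * (n + j - d) [MOD n] := e3
        _ = n + j - d := by ring
    have e5 : (n + j - d) + d = j + n := by omega
    rw [e5] at e4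
    have : (2*x₀+d) % n = (j + n) % n := e4
    rw [this, Nat.add_mod_right, Nat.mod_eq_of_lt hj]
  have hpred : ∀ x, ((2*x+d) % n = j ↔ x % n = x₀) := by
    intro x
    constructor
    · intro h
      have h1 : 2*x + d ≡ 2*x₀ + d [MOD n] := by
        unfold Nat.ModEq
        rw [h, hsol]
      have h2 : 2*x ≡ 2*x₀ [MOD n] := Nat.ModEq.add_right_cancel' d h1
      have h3 : x ≡ x₀ [MOD n] := Nat.ModEq.cancel_left_of_coprime (by
        rw [Nat.gcd_comm]; exact coprime_two n hn) h2
      have h4 : x % n = x₀ % n := h3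
      rw [h4, Nat.mod_eq_of_lt hx₀lt]
    · intro h
      have h1 : 2*x + d ≡ 2*(x % n) + d [MOD n] :=
        Nat.ModEq.add_right d (Nat.ModEq.mul_left 2 (Nat.mod_modEq x n).symm)
      rw [h] at h1
      have : (2*x+d) % n = (2*x₀+d) % n := h1
      rw [this, hsol]
  have : (range (n*D)).filter (fun x => (2*x+d) % n = j)
      = (range (n*D)).filter (fun x => x % n = x₀) := by
    apply Finset.filter_congr
    intro x _
    simp only [hpred x, decide_eq_true_eq]
  rw [this]
  exact count_mod n D x₀ hx₀lt

private lemma count_col_even (n' D j d : ℕ) (hn' : 0 < n') (hj : j < 2*n') (hd : d < 2) :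
    ((range (n'*D)).filter (fun x => (2*x+d) % (2*n') = j)).card = if j % 2 = d then D else 0 := by
  have key : ∀ x, (2*x+d) % (2*n') = 2*(x % n') + d := by
    intro x
    have h1 : (2*x) % (2*n') = 2*(x % n') := Nat.mul_mod_mul_left 2 x n'
    have h2 : (2*x + d) % (2*n') = ((2*x) % (2*n') + d) % (2*n') := by
      conv_lhs => rw [Nat.add_mod, Nat.mod_eq_of_lt (show d < 2*n' by omega)]
    rw [h2, h1]
    apply Nat.mod_eq_of_lt
    have := Nat.mod_lt x hn'
    omega
  by_cases hpar : j % 2 = d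
  · rw [if_pos hpar]
    have : (range (n'*D)).filter (fun x => (2*x+d) % (2*n') = j)
        = (range (n'*D)).filter (fun x => x % n' = j/2) := by
      apply Finset.filter_congr
      intro x _
      rw [key x]
      constructor
      · intro h; omega
      · intro h; omega
    rw [this]
    exact count_mod n' D (j/2) (by omega)
  · rw [if_neg hpar]
    rw [Finset.card_eq_zero, Finset.filter_eq_empty_iff]
    intro x _
    rw [key x]
    have := Nat.mod_lt x hn'
    omega

private lemma rowcount_even (H U i a : ℕ) (hH : 0 < H) (hU : 0 < U) (hi : i < 2*U) (ha : a < 2) :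
    ((range (H*U)).filter (fun x => (2*(x/H)+a) % (2*U) = i)).card
      = if i % 2 = a then H else 0 := by
  have key : ∀ x, x < H*U → ((2*(x/H)+a) % (2*U) = (2*(x/H)+a)) := by
    intro x hx
    apply Nat.mod_eq_of_lt
    have : x / H < U := by
      rw [Nat.div_lt_iff_lt_mul hH, Nat.mul_comm]
      omega
    omega
  by_cases hpar : i % 2 = a
  · rw [if_pos hpar]
    have : (range (H*U)).filter (fun x => (2*(x/H)+a) % (2*U) = i)
        = (range (H*U)).filter (fun x => x/H = i/2) := by
      apply Finset.filter_congr
      intro x hx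
      simp only [mem_range] at hx
      rw [key x hx]
      constructor
      · intro h; omega
      · intro h; omega
    rw [this]
    exact count_div H U (i/2) hH (by omega)
  · rw [if_neg hpar]
    rw [Finset.card_eq_zero, Finset.filter_eq_empty_iff]
    intro x hx
    simp only [mem_range] at hx
    rw [key x hx]
    omega

private lemma rowcount_odd (H m i a : ℕ) (hH : 0 < H) (hm : 2 ≤ m) (hi : i < m) (ha : a < 2) :
    ((range (H*m)).filter (fun x => (x/H+a) % m = i)).card = H := by
  obtain ⟨v, hvlt, hV'⟩ : ∃ v, v < m ∧
      ((a = 0 ∧ v = i) ∨ (a = 1 ∧ i = 0 ∧ v = m - 1) ∨ (a = 1 ∧ 1 ≤ i ∧ v = i - 1)) := by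
    refine ⟨(i + m - a) % m, Nat.mod_lt _ (by omega), ?_⟩
    rcases (show a = 0 ∨ a = 1 by omega) with h|h
    · left
      refine ⟨h, ?_⟩
      rw [h, Nat.sub_zero, Nat.add_mod_right, Nat.mod_eq_of_lt hi]
    · rcases Nat.eq_zero_or_pos i with h0|h0
      · right; left
        refine ⟨h, h0, ?_⟩
        rw [h, h0]
        simpa using Nat.mod_eq_of_lt (show m - 1 < m by omega)
      · right; right
        refine ⟨h, h0, ?_⟩
        rw [h]
        have h2 : i + m - 1 = (i-1) + m := by omega
        rw [h2, Nat.add_mod_right, Nat.mod_eq_of_lt (by omega)]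
  have key2 : ∀ u, u < m → ((u+a) % m = i ↔ u = v) := by
    intro u hu
    have hL' : (u+a < m ∧ (u+a) % m = u+a) ∨ (u+a = m ∧ (u+a) % m = 0) := by
      rcases Nat.lt_or_ge (u+a) m with h|h
      · exact Or.inl ⟨h, Nat.mod_eq_of_lt h⟩
      · have he : u + a = m := by omega
        exact Or.inr ⟨he, by rw [he, Nat.mod_self]⟩
    rcases hL' with ⟨h1,h2⟩|⟨h1,h2⟩ <;> rw [h2] <;> omega
  have hfc : (range (H*m)).filter (fun x => (x/H+a) % m = i)
      = (range (H*m)).filter (fun x => x/H = v) := by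
    apply Finset.filter_congr
    intro x hx
    simp only [mem_range] at hx
    have hu : x / H < m := by
      rw [Nat.div_lt_iff_lt_mul hH, Nat.mul_comm]; omega
    simp only [key2 (x/H) hu, decide_eq_true_eq]
  rw [hfc]
  exact count_div H m v hH hvlt

private lemma modeq_bounded (n a b : ℕ) (hn : 0 < n)
    (h : a % n = b % n) (hb : (a : ℤ) - b < n) (hb' : (b : ℤ) - a < n) : a = b := by
  have h1 : (n:ℤ) ∣ (b : ℤ) - a := Nat.modEq_iff_dvd.mp h
  obtain ⟨z, hz⟩ := h1
  have h2 : (n:ℤ) * z = 0 := by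
    apply int_mul_eq_zero_of _ _ (by exact_mod_cast hn) <;> omega
  omega

private lemma pattern_inj_even (H n U : ℕ) (hH : 0 < H) (hn : 0 < n) (h2H : 2*H ≤ n) :
    ∀ x x' a a' d d', x < H*U → x' < H*U → a < 2 → a' < 2 → d < 2 → d' < 2 →
      2*(x/H)+a = 2*(x'/H)+a' → (2*x+d) % n = (2*x'+d') % n →
      x = x' ∧ a = a' ∧ d = d' := by
  intro x x' a a' d d' hx hx' ha ha' hd hd' hrow hcol
  have hdm := Nat.div_add_mod x H
  have hdm' := Nat.div_add_mod x' H
  have hmod := Nat.mod_lt x hH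
  have hmod' := Nat.mod_lt x' hH
  have hau : a = a' ∧ x/H = x'/H := by omega
  have hHu : H * (x/H) = H * (x'/H) := by rw [hau.2]
  have heq : 2*x+d = 2*x'+d' := by
    apply modeq_bounded n _ _ hn hcol <;> push_cast <;> omega
  omega

private lemma pattern_inj_odd (H n m : ℕ) (hH : 0 < H) (hn : 0 < n) (hm : 2 ≤ m)
    (h4H : 4*H ≤ n) (hdvd : ∃ w, 2*(H*m) = n*w) :
    ∀ x x' a a' d d', x < H*m → x' < H*m → a < 2 → a' < 2 → d < 2 → d' < 2 →
      (x/H+a) % m = (x'/H+a') % m → (2*x+d) % n = (2*x'+d') % n →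
      x = x' ∧ a = a' ∧ d = d' := by
  intro x x' a a' d d' hx hx' ha ha' hd hd' hrow hcol
  have hdm := Nat.div_add_mod x H
  have hdm' := Nat.div_add_mod x' H
  have hmod := Nat.mod_lt x hH
  have hmod' := Nat.mod_lt x' hH
  have hu : x / H < m := by rw [Nat.div_lt_iff_lt_mul hH, Nat.mul_comm]; omega
  have hu' : x' / H < m := by rw [Nat.div_lt_iff_lt_mul hH, Nat.mul_comm]; omega
  -- divisibility fact
  have hdvd2 : (n:ℤ) ∣ (2*(x':ℤ)+d') - (2*(x:ℤ)+d) := Nat.modEq_iff_dvd.mp hcol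
  generalize hg1 : x / H = u at *
  generalize hg2 : x' / H = u' at *
  -- case analysis on rows
  have hcase : (u + a = u' + a') ∨ (u + a = m ∧ u' + a' = 0) ∨
      (u + a = 0 ∧ u' + a' = m) := by
    have hL : (u+a < m ∧ (u+a) % m = u+a) ∨ (u+a = m ∧ (u+a) % m = 0) := by
      rcases Nat.lt_or_ge (u+a) m with h|h
      · exact Or.inl ⟨h, Nat.mod_eq_of_lt h⟩
      · have he : u+a = m := by omega
        exact Or.inr ⟨he, by rw [he, Nat.mod_self]⟩
    have hL' : (u'+a' < m ∧ (u'+a') % m = u'+a') ∨ (u'+a' = m ∧ (u'+a') % m = 0) := by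
      rcases Nat.lt_or_ge (u'+a') m with h|h
      · exact Or.inl ⟨h, Nat.mod_eq_of_lt h⟩
      · have he : u'+a' = m := by omega
        exact Or.inr ⟨he, by rw [he, Nat.mod_self]⟩
    rcases hL with ⟨h1,h2⟩|⟨h1,h2⟩ <;> rcases hL' with ⟨h3,h4⟩|⟨h3,h4⟩ <;>
      rw [h2, h4] at hrow <;> omega
  clear hrow hcol
  rcases hcase with hc|hc|hc
  · -- same or adjacent blocks
    rcases (show (u = u' ∧ a = a') ∨ (u = u' + 1 ∧ a = 0 ∧ a' = 1) ∨
        (u' = u + 1 ∧ a' = 0 ∧ a = 1) by omega) with ⟨h1,h2⟩|⟨h1,h2,h3⟩|⟨h1,h2,h3⟩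
    · have hHu : H * u = H * u' := by rw [h1]
      obtain ⟨z, hz⟩ := hdvd2
      have heq : (n:ℤ) * z = 0 := by
        apply int_mul_eq_zero_of _ _ (by exact_mod_cast hn) <;> push_cast at hz ⊢ <;> omega
      omega
    · -- x in block u'+1, x' in block u' : 0 < x - x' < 2H, contradiction with col eq
      exfalso
      have hHu : H * u = H * u' + H := by rw [h1, Nat.mul_succ]
      obtain ⟨z, hz⟩ := hdvd2
      have h2 : (n:ℤ) * z = 0 := by
        apply int_mul_eq_zero_of _ _ (by exact_mod_cast hn) <;> push_cast at hz ⊢ <;> omega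
      omega
    · exfalso
      have hHu : H * u' = H * u + H := by rw [h1, Nat.mul_succ]
      obtain ⟨z, hz⟩ := hdvd2
      have h2 : (n:ℤ) * z = 0 := by
        apply int_mul_eq_zero_of _ _ (by exact_mod_cast hn) <;> push_cast at hz ⊢ <;> omega
      omega
  · -- wrap case: u = m-1, a = 1, u' = 0, a' = 0
    exfalso
    obtain ⟨w, hw⟩ := hdvd
    have h1 : u = m - 1 := by omega
    have h2 : a = 1 ∧ u' = 0 ∧ a' = 0 := by omega
    have hj : H * u' = 0 := by rw [h2.2.1, Nat.mul_zero]
    have hHu : H * u + H = H * m := by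
      rw [h1, ← Nat.mul_succ]
      congr 1
      omega
    -- (2x'+d') - (2x+d) + 2*H*m  is divisible by n and in (0, n)
    obtain ⟨z, hz⟩ := hdvd2
    have hz2 : (2*(x':ℤ)+d') - (2*(x:ℤ)+d) + 2*((H*m : ℕ) : ℤ) = n*(z + w) := by
      have h5 : ((2*(H*m) : ℕ) : ℤ) = n*w := by exact_mod_cast hw
      have h6 : (n:ℤ)*(z + w) = n*z + n*w := by ring
      rw [h6, ← h5]
      omega
    have h3 : (n:ℤ) * (z+w) = 0 := by
      apply int_mul_eq_zero_of _ _ (by exact_mod_cast hn) <;> rw [← hz2] <;> omega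
    have hz3 : (2*(x':ℤ)+d') - (2*(x:ℤ)+d) + 2*((H*m : ℕ) : ℤ) = 0 := by rw [hz2, h3]
    omega
  · exfalso
    obtain ⟨w, hw⟩ := hdvd
    have h1 : u' = m - 1 := by omega
    have h2 : a' = 1 ∧ u = 0 ∧ a = 0 := by omega
    have hj : H * u = 0 := by rw [h2.2.1, Nat.mul_zero]
    have hHu : H * u' + H = H * m := by
      rw [h1, ← Nat.mul_succ]
      congr 1
      omega
    obtain ⟨z, hz⟩ := hdvd2
    have hz2 : (2*(x:ℤ)+d) - (2*(x':ℤ)+d') + 2*((H*m : ℕ) : ℤ) = n*((-z) + w) := by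
      have h5 : ((2*(H*m) : ℕ) : ℤ) = n*w := by exact_mod_cast hw
      have h6 : (n:ℤ)*((-z) + w) = -(n*z) + n*w := by ring
      rw [h6, ← h5]
      omega
    have h3 : (n:ℤ) * (-z+w) = 0 := by
      apply int_mul_eq_zero_of _ _ (by exact_mod_cast hn) <;> rw [← hz2] <;> omega
    have hz3 : (2*(x:ℤ)+d) - (2*(x':ℤ)+d') + 2*((H*m : ℕ) : ℤ) = 0 := by rw [hz2, h3]
    omega


private lemma coprime4 (b : ℕ) (hb : ¬ (2 ∣ b)) : Nat.Coprime 4 b := by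
  have h2 : Nat.Coprime 2 b := by
    rcases (Nat.dvd_prime Nat.prime_two).mp (Nat.gcd_dvd_left 2 b) with h|h
    · exact h
    · exact absurd (h ▸ Nat.gcd_dvd_right 2 b) hb
  have : Nat.Coprime (2^2) b := Nat.Coprime.pow_left 2 h2
  simpa using this

private lemma exists_iota_theta (Γ : Type*) [AddCommGroup Γ] [Fintype Γ]
    (h4 : 4 ∣ Fintype.card Γ) :
    ∃ ι θ : Γ, θ + θ = 0 ∧ θ ≠ 0 ∧ (∀ x : Γ, x + x ≠ ι) ∧ (∀ x : Γ, x + x ≠ ι + θ) := by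
  classical
  let φ : Γ →+ Γ := AddMonoidHom.mk' (fun g => g + g) (fun a b => by abel)
  have hφ : ∀ g, φ g = g + g := fun g => rfl
  have h2card : (2:ℕ) ∣ Fintype.card Γ := dvd_trans (by norm_num) h4
  haveI : Fact (Nat.Prime 2) := ⟨Nat.prime_two⟩
  obtain ⟨θ₀, hθ₀⟩ := exists_prime_addOrderOf_dvd_card 2 h2card
  have hθ₀2 : θ₀ + θ₀ = 0 := by
    have := addOrderOf_nsmul_eq_zero θ₀
    rw [hθ₀] at this
    simpa [two_nsmul] using this
  have hθ₀0 : θ₀ ≠ 0 := by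
    intro h
    rw [h, addOrderOf_zero] at hθ₀
    omega
  have hθ₀K : θ₀ ∈ φ.ker := by
    rw [AddMonoidHom.mem_ker, hφ, hθ₀2]
  have hprod : Nat.card Γ = Nat.card φ.ker * Nat.card φ.range := by
    have e := QuotientAddGroup.quotientKerEquivRange φ
    have h1 := AddSubgroup.card_eq_card_quotient_mul_card_addSubgroup φ.ker
    rw [Nat.card_congr e.toEquiv] at h1
    rw [h1]; ring
  have main : ∃ θ : Γ, θ + θ = 0 ∧ θ ≠ 0 ∧
      (θ ∈ φ.range ∨ 4 ≤ Nat.card φ.ker) := by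
    by_cases hex : ∃ x : Γ, x + x ≠ 0 ∧ (x+x) + (x+x) = 0
    · obtain ⟨x, hx1, hx2⟩ := hex
      exact ⟨x + x, hx2, hx1, Or.inl ⟨x, rfl⟩⟩
    · push_neg at hex
      refine ⟨θ₀, hθ₀2, hθ₀0, Or.inr ?_⟩
      have hR : ∀ y ∈ φ.range, y + y = 0 → y = 0 := by
        rintro y ⟨x, rfl⟩ hy
        by_contra h
        have hx1 : x + x ≠ 0 := by rw [← hφ]; exact h
        have hx2 : (x+x)+(x+x) = 0 := by rw [← hφ]; exact hy
        exact hex x hx1 hx2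
      have hodd : ¬ (2 ∣ Nat.card φ.range) := by
        intro h2
        rw [Nat.card_eq_fintype_card] at h2
        obtain ⟨y, hy⟩ := exists_prime_addOrderOf_dvd_card (G := φ.range) 2 h2
        have hy2 : (y:Γ) + (y:Γ) = 0 := by
          have h3 := addOrderOf_nsmul_eq_zero y
          rw [hy] at h3
          have h2' : y + y = 0 := by simpa [two_nsmul] using h3
          exact_mod_cast congrArg (Subtype.val) h2'
        have hy0 : (y:Γ) ≠ 0 := by
          intro h
          have : y = 0 := Subtype.ext h
          rw [this, addOrderOf_zero] at hy
          omega
        exact hy0 (hR y y.2 hy2)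
      have h4' : 4 ∣ Nat.card φ.ker * Nat.card φ.range := by
        rw [← hprod, Nat.card_eq_fintype_card]
        exact h4
      have hdvd : 4 ∣ Nat.card φ.ker := (coprime4 _ hodd).dvd_of_dvd_mul_right h4'
      have hk0 : 0 < Nat.card φ.ker := Nat.card_pos
      omega
  obtain ⟨θ, hθ2, hθ0, hgood⟩ := main
  set R := φ.range with hRdef
  haveI : Fintype (Γ ⧸ R) := Fintype.ofFinite _
  have hcardV : Nat.card (Γ ⧸ R) = Nat.card φ.ker := by
    have h1 := AddSubgroup.card_eq_card_quotient_mul_card_addSubgroup R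
    have hrpos : 0 < Nat.card φ.range := Nat.card_pos
    apply Nat.eq_of_mul_eq_mul_right hrpos
    rw [← h1, hprod]
  have hker2 : 2 ≤ Nat.card φ.ker := by
    have hne : φ.ker ≠ ⊥ := by
      intro h
      apply hθ₀0
      simpa [h, AddSubgroup.mem_bot] using hθ₀K
    have := (AddSubgroup.one_lt_card_iff_ne_bot φ.ker).mpr hne
    omega
  have hsmall : ({0, QuotientAddGroup.mk (s := R) θ} : Finset (Γ ⧸ R)).card
      < Fintype.card (Γ ⧸ R) := by
    rcases hgood with hg | hg
    · have hmk : QuotientAddGroup.mk (s := R) θ = 0 := (QuotientAddGroup.eq_zero_iff θ).mpr hg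
      have h1 : ({0, QuotientAddGroup.mk (s := R) θ} : Finset (Γ ⧸ R)).card = 1 := by
        rw [hmk]; simp
      have hV2 : 2 ≤ Fintype.card (Γ ⧸ R) := by
        rw [← Nat.card_eq_fintype_card, hcardV]
        exact hker2
      omega
    · have h1 : ({0, QuotientAddGroup.mk (s := R) θ} : Finset (Γ ⧸ R)).card ≤ 2 :=
        (Finset.card_insert_le _ _).trans (by simp)
      have hV4 : 4 ≤ Fintype.card (Γ ⧸ R) := by
        rw [← Nat.card_eq_fintype_card, hcardV]; exact hg
      omega
  have hne : ((univ : Finset (Γ ⧸ R)) \ {0, QuotientAddGroup.mk (s := R) θ}).Nonempty := by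
    apply Finset.card_pos.mp
    rw [Finset.card_sdiff_of_subset (Finset.subset_univ _), Finset.card_univ]
    omega
  obtain ⟨v, hv⟩ := hne
  rw [Finset.mem_sdiff, Finset.mem_insert, Finset.mem_singleton] at hv
  push_neg at hv
  obtain ⟨-, hv0, hvθ⟩ := hv
  refine ⟨v.out, θ, hθ2, hθ0, ?_, ?_⟩
  · intro x hx
    apply hv0
    have hmem : v.out ∈ R := by
      show v.out ∈ φ.range
      exact ⟨x, by rw [hφ, hx]⟩
    have h0 := (QuotientAddGroup.eq_zero_iff _).mpr hmem
    rw [QuotientAddGroup.out_eq'] at h0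
    exact h0
  · intro x hx
    apply hvθ
    have hmem : v.out + θ ∈ R := by
      show v.out + θ ∈ φ.range
      exact ⟨x, by rw [hφ, hx]⟩
    have h0 : QuotientAddGroup.mk (s := R) (v.out + θ) = 0 :=
      (QuotientAddGroup.eq_zero_iff _).mpr hmem
    rw [QuotientAddGroup.mk_add] at h0
    have hout : QuotientAddGroup.mk (s := R) v.out = v := QuotientAddGroup.out_eq' v
    rw [hout] at h0
    -- v + [θ] = 0, and [θ] + [θ] = 0, so v = [θ]
    have hθθ : QuotientAddGroup.mk (s := R) θ + QuotientAddGroup.mk (s := R) θ = 0 := by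
      rw [← QuotientAddGroup.mk_add, hθ2]
      rfl
    have := congrArg (fun w => w + QuotientAddGroup.mk (s := R) θ) h0
    simp only [zero_add] at this
    rw [add_assoc, hθθ, add_zero] at this
    exact this


private def corner {Γ : Type*} [AddCommGroup Γ] (ι θ g : Γ) (a d : Fin 2) : Γ :=
  if a = d then g + (if a = 0 then 0 else θ) else ι - g + (if a = 0 then 0 else θ)

private lemma corner_sum_d {Γ : Type*} [AddCommGroup Γ] (ι θ g : Γ) (hθ2 : θ + θ = 0)
    (a : Fin 2) : corner ι θ g a 0 + corner ι θ g a 1 = ι := by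
  fin_cases a <;> simp only [corner] <;> norm_num <;>
    first
      | abel1
      | rw [show (ι - g + θ) + (g + θ) = ι + (θ + θ) from by abel, hθ2, add_zero]
      | rw [two_smul, hθ2, add_zero]
      | rw [two_nsmul, hθ2, add_zero]
      | rw [two_zsmul, hθ2, add_zero]
      | rw [show ι + 2 • θ = ι + (θ + θ) from by abel, hθ2, add_zero]

private lemma corner_sum_a {Γ : Type*} [AddCommGroup Γ] (ι θ g : Γ)
    (d : Fin 2) : corner ι θ g 0 d + corner ι θ g 1 d = ι + θ := by
  fin_cases d <;> simp only [corner] <;> norm_num <;> abel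

private lemma corner_inj {Γ : Type*} [AddCommGroup Γ] (ι θ g : Γ)
    (hd1 : g ≠ ι - g) (hd2 : g ≠ g + θ) (hd3 : g ≠ ι - g + θ) (hd4 : ι - g ≠ g + θ)
    (hd5 : ι - g ≠ ι - g + θ) (hd6 : g + θ ≠ ι - g + θ) (hθ0 : θ ≠ 0) :
    ∀ a d a' d' : Fin 2, corner ι θ g a d = corner ι θ g a' d' → a = a' ∧ d = d' := by
  intro a d a' d' h
  fin_cases a <;> fin_cases d <;> fin_cases a' <;> fin_cases d' <;>
    simp only [corner] at h <;> norm_num at h <;>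
    first
      | exact ⟨rfl, rfl⟩
      | exact absurd h hd1
      | exact absurd h.symm hd1
      | exact absurd h hd2
      | exact absurd h.symm hd2
      | exact absurd h hd3
      | exact absurd h.symm hd3
      | exact absurd h hd4
      | exact absurd h.symm hd4
      | exact absurd h hd5
      | exact absurd h.symm hd5
      | exact absurd h hd6
      | exact absurd h.symm hd6
      | exact absurd h hθ0
      | exact absurd h.symm hθ0

section GP
variable {Γ : Type*} [AddCommGroup Γ] (ι θ : Γ)

private lemma group_package (Γ : Type*) [AddCommGroup Γ] [Fintype Γ]
    (I : Type*) [Fintype I] [DecidableEq I]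
    (hI : Fintype.card Γ = 4 * Fintype.card I) :
    ∃ (ι θ : Γ) (W : I → Γ), θ + θ = 0 ∧
      Function.Bijective (fun y : I × Fin 2 × Fin 2 => corner ι θ (W y.1) y.2.1 y.2.2) := by
  classical
  have h4 : 4 ∣ Fintype.card Γ := ⟨Fintype.card I, hI⟩
  obtain ⟨ι, θ, hθ2, hθ0, hι, hιθ⟩ := exists_iota_theta Γ h4
  -- distinctness of the four orbit elements
  have hd1 : ∀ g : Γ, g ≠ ι - g := by
    intro g h
    apply hι g
    nth_rewrite 1 [h]
    abel
  have hd2 : ∀ g : Γ, g ≠ g + θ := by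
    intro g h
    apply hθ0
    have h' : g + 0 = g + θ := by rw [add_zero]; exact h
    exact (add_left_cancel h').symm
  have hd3 : ∀ g : Γ, g ≠ ι - g + θ := by
    intro g h
    apply hιθ g
    nth_rewrite 1 [h]
    abel
  have hd4 : ∀ g : Γ, ι - g ≠ g + θ := by
    intro g h
    apply hιθ g
    have h2 : ι = g + θ + g := by rw [← h]; abel
    rw [h2, show (g+θ+g)+θ = g+g+(θ+θ) by abel, hθ2, add_zero]
  have hd5 : ∀ g : Γ, ι - g ≠ ι - g + θ := fun g => hd2 (ι - g)
  have hd6 : ∀ g : Γ, g + θ ≠ ι - g + θ := by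
    intro g h
    exact hd1 g (add_right_cancel h)
  -- the setoid of Klein orbits
  let r : Γ → Γ → Prop := fun g g' => g' = g ∨ g' = ι - g ∨ g' = g + θ ∨ g' = ι - g + θ
  have hneg : -θ = θ := neg_eq_of_add_eq_zero_left hθ2
  have hsymm : ∀ {a b}, r a b → r b a := by
    rintro a b (rfl|rfl|rfl|rfl)
    · exact Or.inl rfl
    · refine Or.inr (Or.inl ?_); abel
    · refine Or.inr (Or.inr (Or.inl ?_)); rw [add_assoc, hθ2, add_zero]
    · refine Or.inr (Or.inr (Or.inr ?_)); abel
  have htrans : ∀ {a b c}, r a b → r b c → r a c := by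
    rintro a b c (rfl|rfl|rfl|rfl) (rfl|rfl|rfl|rfl)
    · exact Or.inl rfl
    · exact Or.inr (Or.inl rfl)
    · exact Or.inr (Or.inr (Or.inl rfl))
    · exact Or.inr (Or.inr (Or.inr rfl))
    · exact Or.inr (Or.inl rfl)
    · refine Or.inl ?_; abel
    · exact Or.inr (Or.inr (Or.inr rfl))
    · refine Or.inr (Or.inr (Or.inl ?_)); abel
    · exact Or.inr (Or.inr (Or.inl rfl))
    · refine Or.inr (Or.inr (Or.inr ?_))
      rw [show ι - (a + θ) = (ι - a + θ) - (θ + θ) from by abel, hθ2, sub_zero]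
    · refine Or.inl ?_; rw [add_assoc, hθ2, add_zero]
    · refine Or.inr (Or.inl ?_); abel
    · exact Or.inr (Or.inr (Or.inr rfl))
    · refine Or.inr (Or.inr (Or.inl ?_))
      rw [show ι - (ι - a + θ) = (a + θ) - (θ + θ) from by abel, hθ2, sub_zero]
    · refine Or.inr (Or.inl ?_); rw [add_assoc, hθ2, add_zero]
    · refine Or.inl ?_; abel
  let sQ : Setoid Γ := ⟨r, ⟨fun _ => Or.inl rfl, hsymm, htrans⟩⟩
  let Q := Quotient sQ
  haveI : Fintype Q := Fintype.ofFinite Q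
  -- orbit membership of corners
  have horb : ∀ (g : Γ) (a d : Fin 2), r g (corner ι θ g a d) := by
    intro g a d
    fin_cases a <;> fin_cases d <;> simp only [corner, r] <;> norm_num
  -- each fiber has 4 elements
  have hfiber : ∀ q : Q, (univ.filter (fun g : Γ => Quotient.mk sQ g = q)).card = 4 := by
    intro q
    have hout : Quotient.mk sQ q.out = q := Quotient.out_eq q
    have : univ.filter (fun g : Γ => Quotient.mk sQ g = q)
        = ({q.out, ι - q.out, q.out + θ, ι - q.out + θ} : Finset Γ) := by
      ext g
      simp only [mem_filter, mem_univ, true_and, mem_insert, mem_singleton]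
      constructor
      · intro h
        have : Quotient.mk sQ g = Quotient.mk sQ q.out := by rw [hout]; exact h
        have hr : r g q.out := Quotient.exact this
        rcases hsymm hr with h1|h1|h1|h1 <;> tauto
      · intro h
        have hr : r q.out g := by tauto
        have : Quotient.mk sQ g = Quotient.mk sQ q.out := Quotient.sound (hsymm hr)
        rw [this, hout]
    rw [this]
    rw [Finset.card_insert_of_notMem, Finset.card_insert_of_notMem,
      Finset.card_insert_of_notMem, Finset.card_singleton]
    · simp only [mem_singleton]
      exact hd6 q.out
    · simp only [mem_insert, mem_singleton]
      push_neg
      exact ⟨hd4 q.out, hd5 q.out⟩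
    · simp only [mem_insert, mem_singleton]
      push_neg
      exact ⟨hd1 q.out, hd2 q.out, hd3 q.out⟩
  have hQcard : Fintype.card Q = Fintype.card I := by
    have h1 : (univ : Finset Γ).card = ∑ q ∈ (univ : Finset Q), (univ.filter
        (fun g : Γ => Quotient.mk sQ g = q)).card :=
      Finset.card_eq_sum_card_fiberwise (fun x _ => mem_univ _)
    have h2 : (univ : Finset Γ).card = 4 * Fintype.card Q := by
      rw [h1]
      rw [Finset.sum_congr rfl (fun q _ => hfiber q), Finset.sum_const, Finset.card_univ]
      ring
    have h3 : Fintype.card Γ = (univ : Finset Γ).card := rfl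
    omega
  let eQ : I ≃ Q := Fintype.equivOfCardEq hQcard.symm
  refine ⟨ι, θ, fun i => (eQ i).out, hθ2, ?_, ?_⟩
  · -- injective
    intro y y' h
    simp only at h
    have e1 : ∀ (p : I) (a d : Fin 2),
        Quotient.mk sQ (corner ι θ (eQ p).out a d) = eQ p := by
      intro p a d
      have := Quotient.sound (s := sQ) (hsymm (horb (eQ p).out a d))
      rw [this, Quotient.out_eq]
    have hIeq : eQ y.1 = eQ y'.1 := by
      rw [← e1 y.1 y.2.1 y.2.2, ← e1 y'.1 y'.2.1 y'.2.2, h]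
    have h1 : y.1 = y'.1 := eQ.injective hIeq
    rw [h1] at h
    -- now same base point, distinct corners
    obtain ⟨hcc1, hcc2⟩ := corner_inj ι θ ((eQ y'.1).out) (hd1 _) (hd2 _) (hd3 _) (hd4 _)
      (hd5 _) (hd6 _) hθ0 y.2.1 y.2.2 y'.2.1 y'.2.2 h
    exact Prod.ext h1 (Prod.ext hcc1 hcc2)
  · -- surjective
    intro g
    set p := eQ.symm (Quotient.mk sQ g) with hp
    have hex : r (eQ p).out g := by
      apply Quotient.exact (s := sQ)
      rw [Quotient.out_eq, hp, Equiv.apply_symm_apply]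
    set w := (eQ p).out with hw
    rcases hex with h|h|h|h
    · exact ⟨(p, 0, 0), by show corner ι θ w 0 0 = g; rw [h]; simp [corner]⟩
    · exact ⟨(p, 0, 1), by show corner ι θ w 0 1 = g; rw [h]; simp [corner]⟩
    · exact ⟨(p, 1, 1), by show corner ι θ w 1 1 = g; rw [h]; simp [corner]⟩
    · exact ⟨(p, 1, 0), by show corner ι θ w 1 0 = g; rw [h]; simp [corner]⟩
end GP
open Finset

private lemma ite_add_ite' {M : Type*} [AddZeroClass M] (P : Prop) [Decidable P] (u v : M) :
    ((if P then u else 0) + (if P then v else 0)) = if P then (u+v) else 0 := by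
  split <;> simp

private lemma card_filter_fin' (T : ℕ) (p : ℕ → Prop) [DecidablePred p] :
    (univ.filter (fun x : Fin T => p x.val)).card = ((range T).filter p).card := by
  rw [Finset.card_filter, Finset.card_filter,
    Fin.sum_univ_eq_sum_range (fun x => if p x then 1 else 0)]

private lemma sum_filter_fin' {M : Type*} [AddCommMonoid M] (T : ℕ) (p : ℕ → Prop)
    [DecidablePred p] (v : M) :
    (∑ x : Fin T, if p x.val then v else 0) = ((range T).filter p).card • v := by
  rw [Fin.sum_univ_eq_sum_range (fun x => if p x then v else 0), ← Finset.sum_filter,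
    Finset.sum_const]
open Finset

private theorem aux (m n s k c : ℕ) (hs2 : 2 ≤ s) (hsn : s ≤ n) (hk2 : 2 ≤ k) (hkm : k ≤ m)
    (heq : m * s = n * k) (hc : 1 ≤ c) (hse : s % 2 = 0) (hke : k % 2 = 0)
    (hms : m % 2 = 1 → s % 4 = 0) (hns : n % 2 = 1 → k % 4 = 0) (h4 : (m*s) % 4 = 0)
    (Γ : Type*) [AddCommGroup Γ] [Fintype Γ] (hcard : Fintype.card Γ = n * k * c) :
    ∃ A : Fin c → Fin m → Fin n → Option Γ, IsPartialMRS m n s k c A := by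
  classical
  have hm2 : 2 ≤ m := le_trans hk2 hkm
  have hn2 : 2 ≤ n := le_trans hs2 hsn
  have hm0 : 0 < m := by omega
  have hn0 : 0 < n := by omega
  -- T : number of blocks per array
  obtain ⟨T, hT⟩ : ∃ T, n * k = 4 * T := ⟨m*s/4, by omega⟩
  have hT0 : 0 < T := by nlinarith
  have hTms : m * s = 4 * T := by omega
  -- the row pattern package
  obtain ⟨H, rN, hrNlt, hinj, hcount⟩ : ∃ (H : ℕ) (rN : ℕ → ℕ → ℕ),
      (∀ x a, x < T → a < 2 → rN x a < m) ∧
      (∀ x x' a a' d d', x < T → x' < T → a < 2 → a' < 2 → d < 2 → d' < 2 →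
        rN x a = rN x' a' → (2*x+d) % n = (2*x'+d') % n → x = x' ∧ a = a' ∧ d = d') ∧
      (∀ i, i < m → ((range T).filter (fun x => rN x 0 = i)).card
          + ((range T).filter (fun x => rN x 1 = i)).card = s/2) := by
    rcases Nat.even_or_odd m with hme | hmo
    · -- m even
      obtain ⟨U, hU⟩ : ∃ U, m = 2*U := by
        obtain ⟨U, hU⟩ := hme; exact ⟨U, by omega⟩
      obtain ⟨H, hH⟩ : ∃ H, s = 2*H := ⟨s/2, by omega⟩
      have hHpos : 0 < H := by omega
      have hUpos : 0 < U := by omega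
      have hTH : T = H * U := by
        have : m * s = 4 * (H*U) := by rw [hU, hH]; ring
        omega
      have h2Hn : 2*H ≤ n := by omega
      refine ⟨H, fun x a => (2*(x/H)+a) % m, ?_, ?_, ?_⟩
      · intro x a _ _
        exact Nat.mod_lt _ hm0
      · intro x x' a a' d d' hx hx' ha ha' hd hd' hrow hcol
        have hrow' : (2*(x/H)+a) % m = (2*(x'/H)+a') % m := hrow
        have hcol' : (2*x+d) % n = (2*x'+d') % n := hcol
        have hv : ∀ z b, z < T → b < 2 → (2*(z/H)+b) % m = 2*(z/H)+b := by
          intro z b hz hb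
          apply Nat.mod_eq_of_lt
          have : z / H < U := by
            rw [Nat.div_lt_iff_lt_mul hHpos, Nat.mul_comm]
            omega
          omega
        rw [hv x a hx ha, hv x' a' hx' ha'] at hrow'
        exact pattern_inj_even H n U hHpos hn0 h2Hn x x' a a' d d'
          (by omega) (by omega) ha ha' hd hd' hrow' hcol'
      · intro i hi
        show ((range T).filter (fun x => (2*(x/H)+0) % m = i)).card
            + ((range T).filter (fun x => (2*(x/H)+1) % m = i)).card = s/2
        rw [hTH, hU]
        have h0 := rowcount_even H U i 0 hHpos hUpos (by omega) (by omega)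
        have h1 := rowcount_even H U i 1 hHpos hUpos (by omega) (by omega)
        rw [h0, h1]
        by_cases hi2 : i % 2 = 0
        · rw [if_pos hi2, if_neg (by omega)]
          omega
        · rw [if_neg hi2, if_pos (by omega)]
          omega
    · -- m odd
      have hmodd : m % 2 = 1 := Nat.odd_iff.mp hmo
      have hs4 : s % 4 = 0 := hms hmodd
      obtain ⟨H, hH⟩ : ∃ H, s = 4*H := ⟨s/4, by omega⟩
      have hHpos : 0 < H := by omega
      have hTH : T = H * m := by
        have : m * s = 4 * (H*m) := by rw [hH]; ring
        omega
      have h4Hn : 4*H ≤ n := by omega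
      obtain ⟨k2, hk2e⟩ : ∃ k2, k = 2*k2 := ⟨k/2, by omega⟩
      have hdvd : ∃ w, 2*(H*m) = n*w := by
        refine ⟨k2, ?_⟩
        have h1 : n * k = 2 * (n * k2) := by rw [hk2e]; ring
        omega
      refine ⟨H, fun x a => (x/H + a) % m, ?_, ?_, ?_⟩
      · intro x a _ _
        exact Nat.mod_lt _ hm0
      · intro x x' a a' d d' hx hx' ha ha' hd hd' hrow hcol
        have hrow' : (x/H+a) % m = (x'/H+a') % m := hrow
        have hcol' : (2*x+d) % n = (2*x'+d') % n := hcol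
        exact pattern_inj_odd H n m hHpos hn0 hm2 h4Hn hdvd x x' a a' d d'
          (by omega) (by omega) ha ha' hd hd' hrow' hcol'
      · intro i hi
        show ((range T).filter (fun x => (x/H+0) % m = i)).card
            + ((range T).filter (fun x => (x/H+1) % m = i)).card = s/2
        rw [hTH]
        have h0 := rowcount_odd H m i 0 hHpos hm2 hi (by omega)
        have h1 := rowcount_odd H m i 1 hHpos hm2 hi (by omega)
        rw [h0, h1]
        omega
  -- the column count package
  have hcolcount : ∀ j, j < n → ((range T).filter (fun x => (2*x) % n = j)).card
      + ((range T).filter (fun x => (2*x+1) % n = j)).card = k/2 := by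
    rcases Nat.even_or_odd n with hne | hno
    · obtain ⟨n2, hn2e⟩ : ∃ n2, n = 2*n2 := by
        obtain ⟨w, hw⟩ := hne; exact ⟨w, by omega⟩
      obtain ⟨k2, hk2e⟩ : ∃ k2, k = 2*k2 := ⟨k/2, by omega⟩
      have hn2pos : 0 < n2 := by omega
      have hTn : T = n2 * k2 := by
        have : n * k = 4 * (n2 * k2) := by rw [hn2e, hk2e]; ring
        omega
      intro j hj
      have h0 := count_col_even n2 k2 j 0 hn2pos (by omega) (by omega)
      have h1 := count_col_even n2 k2 j 1 hn2pos (by omega) (by omega)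
      simp only [Nat.add_zero] at h0
      rw [hTn, hn2e, h0, h1]
      by_cases hj2 : j % 2 = 0
      · rw [if_pos hj2, if_neg (by omega)]
        omega
      · rw [if_neg hj2, if_pos (by omega)]
        omega
    · have hnodd : n % 2 = 1 := Nat.odd_iff.mp hno
      have hk4 : k % 4 = 0 := hns hnodd
      obtain ⟨k4, hk4e⟩ : ∃ k4, k = 4*k4 := ⟨k/4, by omega⟩
      have hTn : T = n * k4 := by
        have : n * k = 4 * (n * k4) := by rw [hk4e]; ring
        omega
      intro j hj
      have h0 := count_col_odd n k4 j 0 hnodd hj (by omega)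
      have h1 := count_col_odd n k4 j 1 hnodd hj (by omega)
      simp only [Nat.add_zero] at h0
      rw [hTn, h0, h1]
      omega
  -- group package
  have hcardI : Fintype.card Γ = 4 * Fintype.card (Fin c × Fin T) := by
    rw [Fintype.card_prod, Fintype.card_fin, Fintype.card_fin, hcard, hT]
    ring
  obtain ⟨ι, θ, W, hθ2, hbij⟩ := group_package Γ (Fin c × Fin T) hcardI
  have hbij' : Function.Bijective (fun y : (Fin c × Fin T) × Fin 2 × Fin 2 =>
      corner ι θ (W y.1) y.2.1 y.2.2) := hbij
  set FF : (Fin c × Fin T) × Fin 2 × Fin 2 → Γ :=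
    fun y => corner ι θ (W y.1) y.2.1 y.2.2 with hFFdef
  set rowF : Fin T → Fin 2 → Fin m :=
    fun x a => ⟨rN x.val a.val, hrNlt _ _ x.isLt a.isLt⟩ with hrowFdef
  set colF : Fin T → Fin 2 → Fin n :=
    fun x d => ⟨(2*x.val+d.val) % n, Nat.mod_lt _ hn0⟩ with hcolFdef
  set cell : (Fin c × Fin T) × Fin 2 × Fin 2 → Fin c × Fin m × Fin n :=
    fun y => (y.1.1, rowF y.1.2 y.2.1, colF y.1.2 y.2.2) with hcelldef
  have hrowval : ∀ (x : Fin T) (a : Fin 2), (rowF x a).val = rN x.val a.val := fun _ _ => rfl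
  have hcolval : ∀ (x : Fin T) (d : Fin 2), (colF x d).val = (2*x.val+d.val) % n :=
    fun _ _ => rfl
  have cell_inj : Function.Injective cell := by
    intro y y' h
    have h1 : y.1.1 = y'.1.1 := congrArg (fun p => p.1) h
    have h2 : rowF y.1.2 y.2.1 = rowF y'.1.2 y'.2.1 := congrArg (fun p => p.2.1) h
    have h3 : colF y.1.2 y.2.2 = colF y'.1.2 y'.2.2 := congrArg (fun p => p.2.2) h
    have h2' : rN y.1.2.val y.2.1.val = rN y'.1.2.val y'.2.1.val := congrArg Fin.val h2
    have h3' : (2*y.1.2.val+y.2.2.val) % n = (2*y'.1.2.val+y'.2.2.val) % n :=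
      congrArg Fin.val h3
    obtain ⟨hx, ha, hd⟩ := hinj y.1.2.val y'.1.2.val y.2.1.val y'.2.1.val
      y.2.2.val y'.2.2.val y.1.2.isLt y'.1.2.isLt y.2.1.isLt y'.2.1.isLt
      y.2.2.isLt y'.2.2.isLt h2' h3'
    exact Prod.ext (Prod.ext h1 (Fin.ext hx)) (Prod.ext (Fin.ext ha) (Fin.ext hd))
  set A : Fin c → Fin m → Fin n → Option Γ := fun t i j =>
    if h : ∃ y, cell y = (t, i, j) then some (FF h.choose) else none with hAdef
  have hAeq : ∀ t i j y, cell y = (t,i,j) → A t i j = some (FF y) := by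
    intro t i j y hy
    have hex : ∃ y', cell y' = (t,i,j) := ⟨y, hy⟩
    have hch : hex.choose = y := cell_inj (hex.choose_spec.trans hy.symm)
    show (if h : ∃ y, cell y = (t,i,j) then some (FF h.choose) else none) = some (FF y)
    rw [dif_pos hex, hch]
  have hAnone : ∀ t i j, ¬ (∃ y, cell y = (t,i,j)) → A t i j = none := by
    intro t i j hne
    show (if h : ∃ y, cell y = (t,i,j) then some (FF h.choose) else none) = none
    rw [dif_neg hne]
  have hAsome : ∀ t i j g, A t i j = some g → ∃ y, cell y = (t,i,j) ∧ FF y = g := by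
    intro t i j g hg
    by_cases hex : ∃ y, cell y = (t,i,j)
    · refine ⟨hex.choose, hex.choose_spec, ?_⟩
      have h1 := hAeq t i j hex.choose hex.choose_spec
      rw [h1] at hg
      exact Option.some.inj hg
    · rw [hAnone t i j hex] at hg
      exact absurd hg (by simp)
  refine ⟨A, ?_, ?_, ?_, ?_⟩
  · -- (a) every element appears exactly once
    intro g
    obtain ⟨y, hy⟩ := hbij'.2 g
    have hy' : FF y = g := hy
    refine ⟨cell y, ?_, ?_⟩
    · show A (cell y).1 (cell y).2.1 (cell y).2.2 = some g
      have hAc := hAeq (cell y).1 (cell y).2.1 (cell y).2.2 y rfl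
      rw [hAc, hy']
    · rintro p hp
      have hp' : A p.1 p.2.1 p.2.2 = some g := hp
      obtain ⟨y', hy'c, hy'f⟩ := hAsome p.1 p.2.1 p.2.2 g hp'
      have hyy : y' = y := hbij'.1 (show FF y' = FF y from hy'f.trans hy'.symm)
      calc p = (p.1, p.2.1, p.2.2) := rfl
        _ = cell y' := hy'c.symm
        _ = cell y := by rw [hyy]
  · -- (b) row counts
    intro t i
    have himg : univ.filter (fun j : Fin n => (A t i j).isSome)
        = (univ.filter (fun z : Fin T × Fin 2 × Fin 2 =>
            rN z.1.val z.2.1.val = i.val)).image (fun z => colF z.1 z.2.2) := by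
      ext j
      simp only [mem_filter, mem_univ, true_and, mem_image]
      constructor
      · intro hs
        rcases ho : A t i j with _ | g
        · rw [ho] at hs; simp at hs
        · obtain ⟨y, hyc, hyf⟩ := hAsome t i j g ho
          refine ⟨(y.1.2, y.2.1, y.2.2), ?_, ?_⟩
          · have := congrArg (fun p => p.2.1) hyc
            exact congrArg Fin.val this
          · exact congrArg (fun p => p.2.2) hyc
      · rintro ⟨z, hz1, hz2⟩
        have hcz : cell ((t, z.1), z.2.1, z.2.2) = (t, i, j) := by
          have hr : rowF z.1 z.2.1 = i := Fin.ext hz1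
          show ((t, z.1).1, rowF z.1 z.2.1, colF z.1 z.2.2) = (t, i, j)
          rw [hr, hz2]
        rw [hAeq t i j _ hcz]
        simp
    rw [himg]
    rw [Finset.card_image_of_injOn]
    · -- card of the fiber is s
      rw [Finset.card_filter]
      simp only [Fintype.sum_prod_type, Fin.sum_univ_two, Fin.val_zero, Fin.val_one]
      have hptwise : ∀ x : Fin T,
          ((if rN x.val 0 = i.val then 1 else 0) + (if rN x.val 0 = i.val then 1 else 0)
            + ((if rN x.val 1 = i.val then 1 else 0) + (if rN x.val 1 = i.val then 1 else 0)))
          = ((if rN x.val 0 = i.val then (1:ℕ) else 0) * 2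
            + (if rN x.val 1 = i.val then (1:ℕ) else 0) * 2) := by
        intro x
        by_cases h0 : rN x.val 0 = i.val <;> by_cases h1 : rN x.val 1 = i.val <;>
          simp [h0, h1]
      rw [Finset.sum_congr rfl (fun x _ => hptwise x)]
      rw [Finset.sum_add_distrib, ← Finset.sum_mul, ← Finset.sum_mul]
      rw [Fin.sum_univ_eq_sum_range (fun x => if rN x 0 = i.val then (1:ℕ) else 0)]
      rw [Fin.sum_univ_eq_sum_range (fun x => if rN x 1 = i.val then (1:ℕ) else 0)]
      rw [← Finset.card_filter, ← Finset.card_filter]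
      have := hcount i.val i.isLt
      omega
    · -- injectivity on the fiber
      intro z hz z' hz' hcc
      simp only [Finset.mem_coe, mem_filter, mem_univ, true_and] at hz hz'
      have h3' : (2*z.1.val+z.2.2.val) % n = (2*z'.1.val+z'.2.2.val) % n :=
        congrArg Fin.val hcc
      obtain ⟨hx, ha, hd⟩ := hinj z.1.val z'.1.val z.2.1.val z'.2.1.val
        z.2.2.val z'.2.2.val z.1.isLt z'.1.isLt z.2.1.isLt z'.2.1.isLt
        z.2.2.isLt z'.2.2.isLt (hz.trans hz'.symm) h3'
      exact Prod.ext (Fin.ext hx) (Prod.ext (Fin.ext ha) (Fin.ext hd))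
  · -- (c) column counts
    intro t j
    have himg : univ.filter (fun i : Fin m => (A t i j).isSome)
        = (univ.filter (fun z : Fin T × Fin 2 × Fin 2 =>
            (2*z.1.val+z.2.2.val) % n = j.val)).image (fun z => rowF z.1 z.2.1) := by
      ext i
      simp only [mem_filter, mem_univ, true_and, mem_image]
      constructor
      · intro hs
        rcases ho : A t i j with _ | g
        · rw [ho] at hs; simp at hs
        · obtain ⟨y, hyc, hyf⟩ := hAsome t i j g ho
          refine ⟨(y.1.2, y.2.1, y.2.2), ?_, ?_⟩
          · have := congrArg (fun p => p.2.2) hyc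
            exact congrArg Fin.val this
          · exact congrArg (fun p => p.2.1) hyc
      · rintro ⟨z, hz1, hz2⟩
        have hcz : cell ((t, z.1), z.2.1, z.2.2) = (t, i, j) := by
          have hcj : colF z.1 z.2.2 = j := Fin.ext hz1
          show ((t, z.1).1, rowF z.1 z.2.1, colF z.1 z.2.2) = (t, i, j)
          rw [hcj, hz2]
        rw [hAeq t i j _ hcz]
        simp
    rw [himg]
    rw [Finset.card_image_of_injOn]
    · rw [Finset.card_filter]
      simp only [Fintype.sum_prod_type, Fin.sum_univ_two, Fin.val_zero, Fin.val_one, add_zero]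
      have hptwise : ∀ x : Fin T,
          ((if (2*x.val) % n = j.val then 1 else 0)
            + (if (2*x.val+1) % n = j.val then 1 else 0)
            + ((if (2*x.val) % n = j.val then 1 else 0)
            + (if (2*x.val+1) % n = j.val then 1 else 0)))
          = ((if (2*x.val) % n = j.val then (1:ℕ) else 0) * 2
            + (if (2*x.val+1) % n = j.val then (1:ℕ) else 0) * 2) := by
        intro x
        by_cases h0 : (2*x.val) % n = j.val <;> by_cases h1 : (2*x.val+1) % n = j.val <;>
          simp [h0, h1]
      rw [Finset.sum_congr rfl (fun x _ => hptwise x)]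
      rw [Finset.sum_add_distrib, ← Finset.sum_mul, ← Finset.sum_mul]
      rw [Fin.sum_univ_eq_sum_range (fun x => if (2*x) % n = j.val then (1:ℕ) else 0)]
      rw [Fin.sum_univ_eq_sum_range (fun x => if (2*x+1) % n = j.val then (1:ℕ) else 0)]
      rw [← Finset.card_filter, ← Finset.card_filter]
      have := hcolcount j.val j.isLt
      omega
    · intro z hz z' hz' hcc
      simp only [Finset.mem_coe, mem_filter, mem_univ, true_and] at hz hz'
      have h2' : rN z.1.val z.2.1.val = rN z'.1.val z'.2.1.val := congrArg Fin.val hcc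
      obtain ⟨hx, ha, hd⟩ := hinj z.1.val z'.1.val z.2.1.val z'.2.1.val
        z.2.2.val z'.2.2.val z.1.isLt z'.1.isLt z.2.1.isLt z'.2.1.isLt
        z.2.2.isLt z'.2.2.isLt h2' (hz.trans hz'.symm)
      exact Prod.ext (Fin.ext hx) (Prod.ext (Fin.ext ha) (Fin.ext hd))
  · -- (d) the sums
    refine ⟨(s/2) • ι, (k/2) • (ι + θ), ?_, ?_⟩
    · intro t i
      have himg : univ.filter (fun j : Fin n => (A t i j).isSome)
          = (univ.filter (fun z : Fin T × Fin 2 × Fin 2 =>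
              rN z.1.val z.2.1.val = i.val)).image (fun z => colF z.1 z.2.2) := by
        ext j
        simp only [mem_filter, mem_univ, true_and, mem_image]
        constructor
        · intro hs
          rcases ho : A t i j with _ | g
          · rw [ho] at hs; simp at hs
          · obtain ⟨y, hyc, hyf⟩ := hAsome t i j g ho
            refine ⟨(y.1.2, y.2.1, y.2.2), ?_, ?_⟩
            · have := congrArg (fun p => p.2.1) hyc
              exact congrArg Fin.val this
            · exact congrArg (fun p => p.2.2) hyc
        · rintro ⟨z, hz1, hz2⟩
          have hcz : cell ((t, z.1), z.2.1, z.2.2) = (t, i, j) := by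
            have hr : rowF z.1 z.2.1 = i := Fin.ext hz1
            show ((t, z.1).1, rowF z.1 z.2.1, colF z.1 z.2.2) = (t, i, j)
            rw [hr, hz2]
          rw [hAeq t i j _ hcz]
          simp
      have hsub : ∑ j : Fin n, (A t i j).getD 0
          = ∑ j ∈ univ.filter (fun j : Fin n => (A t i j).isSome), (A t i j).getD 0 := by
        symm
        apply Finset.sum_subset (Finset.filter_subset _ _)
        intro j _ hj
        simp only [mem_filter, mem_univ, true_and] at hj
        rw [Option.not_isSome_iff_eq_none] at hj
        rw [hj]
        rfl
      rw [hsub, himg, Finset.sum_image]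
      · have hterm : ∀ z ∈ univ.filter (fun z : Fin T × Fin 2 × Fin 2 =>
            rN z.1.val z.2.1.val = i.val),
            (A t i (colF z.1 z.2.2)).getD 0 = corner ι θ (W (t, z.1)) z.2.1 z.2.2 := by
          intro z hz
          simp only [mem_filter, mem_univ, true_and] at hz
          have hcz : cell ((t, z.1), z.2.1, z.2.2) = (t, i, colF z.1 z.2.2) := by
            have hr : rowF z.1 z.2.1 = i := Fin.ext hz
            show ((t, z.1).1, rowF z.1 z.2.1, colF z.1 z.2.2) = (t, i, colF z.1 z.2.2)
            rw [hr]
          rw [hAeq t i _ _ hcz]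
          rfl
        rw [Finset.sum_congr rfl hterm]
        rw [Finset.sum_filter]
        simp only [Fintype.sum_prod_type, Fin.sum_univ_two, Fin.val_zero, Fin.val_one]
        have hptwise : ∀ x : Fin T,
            ((if rN x.val 0 = i.val then corner ι θ (W (t, x)) 0 0 else 0)
              + (if rN x.val 0 = i.val then corner ι θ (W (t, x)) 0 1 else 0)
              + ((if rN x.val 1 = i.val then corner ι θ (W (t, x)) 1 0 else 0)
              + (if rN x.val 1 = i.val then corner ι θ (W (t, x)) 1 1 else 0)))
            = ((if rN x.val 0 = i.val then ι else 0) + (if rN x.val 1 = i.val then ι else 0)) := by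
          intro x
          by_cases h0 : rN x.val 0 = i.val <;> by_cases h1 : rN x.val 1 = i.val <;>
            simp [h0, h1]
          · rw [show corner ι θ (W (t, x)) 0 0 + corner ι θ (W (t, x)) 0 1
                + (corner ι θ (W (t, x)) 1 0 + corner ι θ (W (t, x)) 1 1)
                = (corner ι θ (W (t, x)) 0 0 + corner ι θ (W (t, x)) 0 1)
                + (corner ι θ (W (t, x)) 1 0 + corner ι θ (W (t, x)) 1 1) from by abel,
              corner_sum_d ι θ _ hθ2 0, corner_sum_d ι θ _ hθ2 1]
          · exact corner_sum_d ι θ _ hθ2 0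
          · exact corner_sum_d ι θ _ hθ2 1
        rw [Finset.sum_congr rfl (fun x _ => hptwise x)]
        rw [Finset.sum_add_distrib]
        rw [sum_filter_fin' T (fun x => rN x 0 = i.val) ι]
        rw [sum_filter_fin' T (fun x => rN x 1 = i.val) ι]
        rw [← add_nsmul]
        rw [hcount i.val i.isLt]
      · intro z hz z' hz' hcc
        simp only [Finset.mem_coe, mem_filter, mem_univ, true_and] at hz hz'
        have h3' : (2*z.1.val+z.2.2.val) % n = (2*z'.1.val+z'.2.2.val) % n :=
          congrArg Fin.val hcc
        obtain ⟨hx, ha, hd⟩ := hinj z.1.val z'.1.val z.2.1.val z'.2.1.val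
          z.2.2.val z'.2.2.val z.1.isLt z'.1.isLt z.2.1.isLt z'.2.1.isLt
          z.2.2.isLt z'.2.2.isLt (hz.trans hz'.symm) h3'
        exact Prod.ext (Fin.ext hx) (Prod.ext (Fin.ext ha) (Fin.ext hd))
    · intro t j
      have himg : univ.filter (fun i : Fin m => (A t i j).isSome)
          = (univ.filter (fun z : Fin T × Fin 2 × Fin 2 =>
              (2*z.1.val+z.2.2.val) % n = j.val)).image (fun z => rowF z.1 z.2.1) := by
        ext i
        simp only [mem_filter, mem_univ, true_and, mem_image]
        constructor
        · intro hs
          rcases ho : A t i j with _ | g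
          · rw [ho] at hs; simp at hs
          · obtain ⟨y, hyc, hyf⟩ := hAsome t i j g ho
            refine ⟨(y.1.2, y.2.1, y.2.2), ?_, ?_⟩
            · have := congrArg (fun p => p.2.2) hyc
              exact congrArg Fin.val this
            · exact congrArg (fun p => p.2.1) hyc
        · rintro ⟨z, hz1, hz2⟩
          have hcz : cell ((t, z.1), z.2.1, z.2.2) = (t, i, j) := by
            have hcj : colF z.1 z.2.2 = j := Fin.ext hz1
            show ((t, z.1).1, rowF z.1 z.2.1, colF z.1 z.2.2) = (t, i, j)
            rw [hcj, hz2]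
          rw [hAeq t i j _ hcz]
          simp
      have hsub : ∑ i : Fin m, (A t i j).getD 0
          = ∑ i ∈ univ.filter (fun i : Fin m => (A t i j).isSome), (A t i j).getD 0 := by
        symm
        apply Finset.sum_subset (Finset.filter_subset _ _)
        intro i _ hi
        simp only [mem_filter, mem_univ, true_and] at hi
        rw [Option.not_isSome_iff_eq_none] at hi
        rw [hi]
        rfl
      rw [hsub, himg, Finset.sum_image]
      · have hterm : ∀ z ∈ univ.filter (fun z : Fin T × Fin 2 × Fin 2 =>
            (2*z.1.val+z.2.2.val) % n = j.val),
            (A t (rowF z.1 z.2.1) j).getD 0 = corner ι θ (W (t, z.1)) z.2.1 z.2.2 := by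
          intro z hz
          simp only [mem_filter, mem_univ, true_and] at hz
          have hcz : cell ((t, z.1), z.2.1, z.2.2) = (t, rowF z.1 z.2.1, j) := by
            have hcj : colF z.1 z.2.2 = j := Fin.ext hz
            show ((t, z.1).1, rowF z.1 z.2.1, colF z.1 z.2.2) = (t, rowF z.1 z.2.1, j)
            rw [hcj]
          rw [hAeq t _ j _ hcz]
          rfl
        rw [Finset.sum_congr rfl hterm]
        rw [Finset.sum_filter]
        simp only [Fintype.sum_prod_type, Fin.sum_univ_two, Fin.val_zero, Fin.val_one, add_zero]
        have hptwise : ∀ x : Fin T,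
            ((if (2*x.val) % n = j.val then corner ι θ (W (t, x)) 0 0 else 0)
              + (if (2*x.val+1) % n = j.val then corner ι θ (W (t, x)) 0 1 else 0)
              + ((if (2*x.val) % n = j.val then corner ι θ (W (t, x)) 1 0 else 0)
              + (if (2*x.val+1) % n = j.val then corner ι θ (W (t, x)) 1 1 else 0)))
            = ((if (2*x.val) % n = j.val then ι + θ else 0)
              + (if (2*x.val+1) % n = j.val then ι + θ else 0)) := by
          intro x
          by_cases h0 : (2*x.val) % n = j.val <;> by_cases h1 : (2*x.val+1) % n = j.val <;>
            simp [h0, h1]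
          · rw [show corner ι θ (W (t, x)) 0 0 + corner ι θ (W (t, x)) 0 1
                + (corner ι θ (W (t, x)) 1 0 + corner ι θ (W (t, x)) 1 1)
                = (corner ι θ (W (t, x)) 0 0 + corner ι θ (W (t, x)) 1 0)
                + (corner ι θ (W (t, x)) 0 1 + corner ι θ (W (t, x)) 1 1) from by abel,
              corner_sum_a ι θ _ 0, corner_sum_a ι θ _ 1]
          · exact corner_sum_a ι θ _ 0
          · exact corner_sum_a ι θ _ 1
        rw [Finset.sum_congr rfl (fun x _ => hptwise x)]
        rw [Finset.sum_add_distrib]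
        rw [sum_filter_fin' T (fun x => (2*x) % n = j.val) (ι + θ)]
        rw [sum_filter_fin' T (fun x => (2*x+1) % n = j.val) (ι + θ)]
        rw [← add_nsmul]
        rw [hcolcount j.val j.isLt]
      · intro z hz z' hz' hcc
        simp only [Finset.mem_coe, mem_filter, mem_univ, true_and] at hz hz'
        have h2' : rN z.1.val z.2.1.val = rN z'.1.val z'.2.1.val := congrArg Fin.val hcc
        obtain ⟨hx, ha, hd⟩ := hinj z.1.val z'.1.val z.2.1.val z'.2.1.val
          z.2.2.val z'.2.2.val z.1.isLt z'.1.isLt z.2.1.isLt z'.2.1.isLt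
          z.2.2.isLt z'.2.2.isLt h2' (hz.trans hz'.symm)
        exact Prod.ext (Fin.ext hx) (Prod.ext (Fin.ext ha) (Fin.ext hd))

/-- Let `2 ≤ s ≤ n`, `2 ≤ k ≤ m`, `m·s = n·k`, `c ≥ 1` and let `Γ` be an abelian group of
order `n·k·c`. There exists an `MRS_Γ(m,n;s,k;c)` in each of the following cases:
(1) `s ≡ k ≡ 0 (mod 4)`; (2) `s ≡ 2 (mod 4)` and `k ≡ 0 (mod 4)`;
(3) `s ≡ 0 (mod 4)` and `k ≡ 2 (mod 4)`;
(4) `s ≡ k ≡ 2 (mod 4)` and `m ≡ n ≡ 0 (mod 2)`. -/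
theorem stmt18 (m n s k c : ℕ) (hs : 2 ≤ s) (hsn : s ≤ n) (hk : 2 ≤ k) (hkm : k ≤ m)
    (heq : m * s = n * k) (hc : 1 ≤ c)
    (Γ : Type*) [AddCommGroup Γ] [Fintype Γ] (hcard : Fintype.card Γ = n * k * c)
    (hcases :
      (s % 4 = 0 ∧ k % 4 = 0) ∨
      (s % 4 = 2 ∧ k % 4 = 0) ∨
      (s % 4 = 0 ∧ k % 4 = 2) ∨
      (s % 4 = 2 ∧ k % 4 = 2 ∧ m % 2 = 0 ∧ n % 2 = 0)) :
    ∃ A : Fin c → Fin m → Fin n → Option Γ, IsPartialMRS m n s k c A := by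
  have h4 : (m*s) % 4 = 0 := by
    rcases hcases with ⟨h1, h2⟩ | ⟨h1, h2⟩ | ⟨h1, h2⟩ | ⟨h1, h2, h3, h4⟩
    · obtain ⟨b, hb⟩ : ∃ b, s = 4*b := ⟨s/4, by omega⟩
      have : m*s = 4*(m*b) := by rw [hb]; ring
      omega
    · obtain ⟨b, hb⟩ : ∃ b, k = 4*b := ⟨k/4, by omega⟩
      have : m*s = 4*(n*b) := by rw [heq, hb]; ring
      omega
    · obtain ⟨b, hb⟩ : ∃ b, s = 4*b := ⟨s/4, by omega⟩
      have : m*s = 4*(m*b) := by rw [hb]; ring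
      omega
    · obtain ⟨a, ha⟩ : ∃ a, m = 2*a := ⟨m/2, by omega⟩
      obtain ⟨b, hb⟩ : ∃ b, s = 2*b := ⟨s/2, by omega⟩
      have : m*s = 4*(a*b) := by rw [ha, hb]; ring
      omega
  have hms : m % 2 = 1 → s % 4 = 0 := by
    intro hm
    rcases hcases with ⟨h1, h2⟩ | ⟨h1, h2⟩ | ⟨h1, h2⟩ | ⟨h1, h2, h3, h4'⟩
    · exact h1
    · exfalso
      obtain ⟨a, ha⟩ : ∃ a, m = 2*a+1 := ⟨m/2, by omega⟩
      obtain ⟨b, hb⟩ : ∃ b, s = 4*b+2 := ⟨s/4, by omega⟩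
      have hx : (2*a+1)*(4*b+2) = m*s := by rw [ha, hb]
      have hy : (2*a+1)*(4*b+2) = 8*(a*b)+4*a+4*b+2 := by ring
      omega
    · exact h1
    · omega
  have hns : n % 2 = 1 → k % 4 = 0 := by
    intro hn
    rcases hcases with ⟨h1, h2⟩ | ⟨h1, h2⟩ | ⟨h1, h2⟩ | ⟨h1, h2, h3, h4'⟩
    · exact h2
    · exact h2
    · exfalso
      obtain ⟨a, ha⟩ : ∃ a, n = 2*a+1 := ⟨n/2, by omega⟩
      obtain ⟨b, hb⟩ : ∃ b, k = 4*b+2 := ⟨k/4, by omega⟩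
      have hx : (2*a+1)*(4*b+2) = n*k := by rw [ha, hb]
      have hy : (2*a+1)*(4*b+2) = 8*(a*b)+4*a+4*b+2 := by ring
      omega
    · omega
  have hse : s % 2 = 0 := by rcases hcases with ⟨h1,_⟩|⟨h1,_⟩|⟨h1,_⟩|⟨h1,_⟩ <;> omega
  have hke : k % 2 = 0 := by
    rcases hcases with ⟨_,h2⟩|⟨_,h2⟩|⟨_,h2⟩|⟨_,h2,_⟩ <;> omega
  exact aux m n s k c hs hsn hk hkm heq hc hse hke hms hns h4 Γ hcard
end
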